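/- arXiv:2506.11969 — 6 statements merged into one kernel-verified Lean document; each statement's English description precedes it below -/
import Mathlib

section
/- Let d ≥ 1 and let μ, ν₁, …, ν_N be Borel probability measures on ℝ^d with finite second moments, and let α₁, …, α_N ≥ 0 with Σᵢ αᵢ = 1 and τ > 0. For each i, let γᵢ be a coupling attaining the infimum defining W²_{2,ub}(μ, νᵢ), let γᵢ = μ ⊗ γ_{i,x} be its disintegration over the first coordinate, let Tᵢ(x) = ∫ y dγ_{i,x}(y), and let T̄(x) = Σᵢ αᵢ Tᵢ(x). Then the objective V(ρ) = Σᵢ αᵢ W²_{2,ub}(ρ, νᵢ) satisfies V(T̄_#μ) ≤ V(μ), where T̄_#μ denotes the pushforward of μ under T̄. -/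
open MeasureTheory ENNReal

noncomputable section

/-- Euclidean space ℝ^d. -/
abbrev Ed (d : ℕ) := EuclideanSpace ℝ (Fin d)

/-- The entropy function ψ(t) = t log t − t + 1 (equal to 1 at t = 0 since log 0 = 0). -/
def entropyPsi (t : ℝ) : ℝ := t * Real.log t - t + 1

open Classical in
/-- The Csiszár divergence D_ψ(ρ‖ν) for the entropy function ψ. -/
def Dpsi {d : ℕ} (ρ ν : Measure (Ed d)) : ℝ≥0∞ :=
  if ρ ≪ ν then ∫⁻ y, ENNReal.ofReal (entropyPsi ((ρ.rnDeriv ν) y).toReal) ∂ν else ⊤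

/-- Squared unbalanced Wasserstein cost W²_{2,ub,τ}(μ,ν). -/
def UOTcost {d : ℕ} (τ : ℝ) (μ ν : Measure (Ed d)) : ℝ≥0∞ :=
  ⨅ (π : Measure (Ed d × Ed d)) (_ : π.map Prod.fst = μ),
    (∫⁻ p, ENNReal.ofReal (‖p.1 - p.2‖ ^ 2 / 2) ∂π)
      + ENNReal.ofReal τ * Dpsi (π.map Prod.snd) ν

/-- γ is an optimal coupling for the unbalanced problem W²_{2,ub,τ}(μ,ν). -/
def IsOptimalCoupling {d : ℕ} (τ : ℝ) (μ ν : Measure (Ed d))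
    (γ : Measure (Ed d × Ed d)) : Prop :=
  γ.map Prod.fst = μ ∧
    (∫⁻ p, ENNReal.ofReal (‖p.1 - p.2‖ ^ 2 / 2) ∂γ)
      + ENNReal.ofReal τ * Dpsi (γ.map Prod.snd) ν = UOTcost τ μ ν

/-- The Fréchet objective V(ρ) = Σᵢ αᵢ W²_{2,ub,τ}(ρ, νᵢ). -/
def Vfun {d : ℕ} (τ : ℝ) {N : ℕ} (α : Fin N → ℝ) (ν : Fin N → Measure (Ed d))
    (ρ : Measure (Ed d)) : ℝ≥0∞ :=
  ∑ i, ENNReal.ofReal (α i) * UOTcost τ ρ (ν i)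

section Aux

open RealInnerProductSpace

variable {E : Type*} [NormedAddCommGroup E] [InnerProductSpace ℝ E] [CompleteSpace E]
  [MeasurableSpace E]

lemma aux_int_sq_sub {κ : Measure E} (hκ : IsProbabilityMeasure κ)
    (hy : Integrable (fun y => y) κ) (hy2 : Integrable (fun y => ‖y‖ ^ 2) κ) (a : E) :
    ∫ y, ‖a - y‖ ^ 2 / 2 ∂κ
      = (‖a‖ ^ 2 - 2 * ⟪a, ∫ y, y ∂κ⟫ + ∫ y, ‖y‖ ^ 2 ∂κ) / 2 := by
  have h1 : (fun y => ‖a - y‖ ^ 2 / 2)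
      = fun y => (‖a‖ ^ 2 - 2 * ⟪a, y⟫ + ‖y‖ ^ 2) / 2 := by
    funext y; rw [norm_sub_sq_real]
  rw [h1]
  rw [integral_div]
  have hi1 : Integrable (fun y => ‖a‖ ^ 2 - 2 * ⟪a, y⟫) κ :=
    (integrable_const _).sub ((hy.const_inner a).const_mul 2)
  rw [integral_add hi1 hy2, integral_sub (integrable_const _) ((hy.const_inner a).const_mul 2),
    integral_const, integral_const_mul 2, integral_inner hy a]
  simp

lemma aux_keyB {N : ℕ} (α : Fin N → ℝ) (hα : ∀ i, 0 ≤ α i) (hαsum : ∑ i, α i = 1)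
    (κ : Fin N → Measure E) (hκ : ∀ i, IsProbabilityMeasure (κ i))
    (hy : ∀ i, Integrable (fun y => y) (κ i))
    (hy2 : ∀ i, Integrable (fun y => ‖y‖ ^ 2) (κ i))
    (x c : E) (hc : c = ∑ i, α i • ∫ y, y ∂κ i) :
    ∑ i, α i * ∫ y, ‖c - y‖ ^ 2 / 2 ∂κ i ≤ ∑ i, α i * ∫ y, ‖x - y‖ ^ 2 / 2 ∂κ i := by
  set m : Fin N → E := fun i => ∫ y, y ∂κ i with hm
  set S : Fin N → ℝ := fun i => ∫ y, ‖y‖ ^ 2 ∂κ i with hS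
  have expand : ∀ a : E,
      ∑ i, α i * ∫ y, ‖a - y‖ ^ 2 / 2 ∂κ i
        = (‖a‖ ^ 2 - 2 * ⟪a, c⟫ + ∑ i, α i * S i) / 2 := by
    intro a
    have h1 : ∀ i : Fin N, α i * ∫ y, ‖a - y‖ ^ 2 / 2 ∂κ i
        = (α i * ‖a‖ ^ 2 - 2 * ⟪a, α i • m i⟫ + α i * S i) / 2 := by
      intro i
      rw [aux_int_sq_sub (hκ i) (hy i) (hy2 i) a, real_inner_smul_right]
      ring
    rw [Finset.sum_congr rfl (fun i _ => h1 i)]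
    rw [← Finset.sum_div]
    have h2 : ∑ i, (α i * ‖a‖ ^ 2 - 2 * ⟪a, α i • m i⟫ + α i * S i)
        = (∑ i, α i) * ‖a‖ ^ 2 - 2 * ⟪a, ∑ i, α i • m i⟫ + ∑ i, α i * S i := by
      rw [Finset.sum_add_distrib, Finset.sum_sub_distrib, ← Finset.sum_mul, inner_sum,
        Finset.mul_sum]
    rw [h2, hαsum, ← hc, one_mul]
  rw [expand c, expand x]
  have h3 : ⟪c, c⟫ = ‖c‖ ^ 2 := real_inner_self_eq_norm_sq c
  have h4 : ⟪x, c⟫ ≤ ‖x‖ * ‖c‖ := real_inner_le_norm x c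
  nlinarith [sq_nonneg (‖x‖ - ‖c‖)]

lemma aux_lint_ofReal_lt_top {α : Type*} [MeasurableSpace α] {μ : Measure α} {f : α → ℝ}
    (hf : Integrable f μ) (h0 : 0 ≤ᵐ[μ] f) :
    ∫⁻ a, ENNReal.ofReal (f a) ∂μ < ⊤ := by
  rw [← ofReal_integral_eq_lintegral_ofReal hf h0]
  exact ofReal_lt_top

end Aux

lemma aux_UOT_lt_top {d : ℕ} {τ : ℝ} {μ ν : Measure (Ed d)} [IsProbabilityMeasure μ]
    [IsProbabilityMeasure ν] (hμ : Integrable (fun x => ‖x‖ ^ 2) μ)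
    (hν : Integrable (fun x => ‖x‖ ^ 2) ν) :
    UOTcost τ μ ν < ⊤ := by
  classical
  have hD : Dpsi ν ν = 0 := by
    rw [Dpsi, if_pos Measure.AbsolutelyContinuous.rfl]
    have h : ∀ᵐ y ∂ν, ENNReal.ofReal (entropyPsi ((ν.rnDeriv ν) y).toReal) = 0 := by
      filter_upwards [Measure.rnDeriv_self ν] with y hy
      rw [hy]
      simp [entropyPsi]
    rw [lintegral_congr_ae h, lintegral_zero]
  have hfst : (μ.prod ν).map Prod.fst = μ := by
    have : (μ.prod ν).fst = μ := Measure.fst_prod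
    exact this
  have hsnd : (μ.prod ν).map Prod.snd = ν := by
    have : (μ.prod ν).snd = ν := Measure.snd_prod
    exact this
  have hle : UOTcost τ μ ν
      ≤ (∫⁻ p, ENNReal.ofReal (‖p.1 - p.2‖ ^ 2 / 2) ∂(μ.prod ν))
        + ENNReal.ofReal τ * Dpsi ((μ.prod ν).map Prod.snd) ν :=
    iInf₂_le (μ.prod ν) hfst
  rw [hsnd, hD, mul_zero, add_zero] at hle
  refine hle.trans_lt ?_
  have hbound : ∀ p : Ed d × Ed d, ENNReal.ofReal (‖p.1 - p.2‖ ^ 2 / 2)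
      ≤ ENNReal.ofReal (‖p.1‖ ^ 2) + ENNReal.ofReal (‖p.2‖ ^ 2) := by
    intro p
    rw [← ENNReal.ofReal_add (sq_nonneg _) (sq_nonneg _)]
    refine ENNReal.ofReal_le_ofReal ?_
    have h1 : ‖p.1 - p.2‖ ≤ ‖p.1‖ + ‖p.2‖ := norm_sub_le _ _
    nlinarith [norm_nonneg (p.1 - p.2), norm_nonneg p.1, norm_nonneg p.2,
      sq_nonneg (‖p.1‖ - ‖p.2‖)]
  refine (lintegral_mono hbound).trans_lt ?_
  have hm1 : Measurable fun x : Ed d => ENNReal.ofReal (‖x‖ ^ 2) :=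
    (measurable_norm.pow_const 2).ennreal_ofReal
  rw [lintegral_add_left (show Measurable fun p : Ed d × Ed d => ENNReal.ofReal (‖p.1‖ ^ 2)
    from hm1.comp measurable_fst)]
  have h1 : ∫⁻ p : Ed d × Ed d, ENNReal.ofReal (‖p.1‖ ^ 2) ∂(μ.prod ν)
      = ∫⁻ x, ENNReal.ofReal (‖x‖ ^ 2) ∂μ := by
    rw [← lintegral_map hm1 measurable_fst, hfst]
  have h2 : ∫⁻ p : Ed d × Ed d, ENNReal.ofReal (‖p.2‖ ^ 2) ∂(μ.prod ν)
      = ∫⁻ x, ENNReal.ofReal (‖x‖ ^ 2) ∂ν := by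
    rw [← lintegral_map hm1 measurable_snd, hsnd]
  rw [h1, h2]
  exact ENNReal.add_lt_top.2
    ⟨aux_lint_ofReal_lt_top hμ (ae_of_all _ fun x => sq_nonneg _),
      aux_lint_ofReal_lt_top hν (ae_of_all _ fun x => sq_nonneg _)⟩

theorem averageMap_pushforward_decreases_objective
    {d N : ℕ} (hd : 1 ≤ d) (τ : ℝ) (hτ : 0 < τ)
    (μ : Measure (Ed d)) [IsProbabilityMeasure μ]
    (hμ : Integrable (fun x => ‖x‖ ^ 2) μ)
    (ν : Fin N → Measure (Ed d)) [∀ i, IsProbabilityMeasure (ν i)]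
    (hν : ∀ i, Integrable (fun x => ‖x‖ ^ 2) (ν i))
    (α : Fin N → ℝ) (hα : ∀ i, 0 ≤ α i) (hαsum : ∑ i, α i = 1)
    (γ : Fin N → Measure (Ed d × Ed d)) [∀ i, IsFiniteMeasure (γ i)]
    (hγ : ∀ i, IsOptimalCoupling τ μ (ν i) (γ i))
    (T : Fin N → Ed d → Ed d)
    (hT : ∀ i x, T i x = ∫ y, y ∂((γ i).condKernel x))
    (Tbar : Ed d → Ed d)
    (hTbar : ∀ x, Tbar x = ∑ i, α i • T i x) :
    Vfun τ α ν (μ.map Tbar) ≤ Vfun τ α ν μ := by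
  classical
  -- each γ i is a probability measure
  have hprobγ : ∀ i, IsProbabilityMeasure (γ i) := by
    intro i
    constructor
    have h := congrArg (fun m : Measure (Ed d) => m Set.univ) (hγ i).1
    simpa [Measure.map_apply measurable_fst MeasurableSet.univ] using h
  have hfstγ : ∀ i, (γ i).fst = μ := fun i => (hγ i).1
  -- finiteness of UOT costs
  have hUfin : ∀ i, UOTcost τ μ (ν i) ≠ ⊤ := fun i => (aux_UOT_lt_top hμ (hν i)).ne
  have hAfin : ∀ i, (∫⁻ p, ENNReal.ofReal (‖p.1 - p.2‖ ^ 2 / 2) ∂γ i) ≠ ⊤ := by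
    intro i
    have hle : (∫⁻ p, ENNReal.ofReal (‖p.1 - p.2‖ ^ 2 / 2) ∂γ i) ≤ UOTcost τ μ (ν i) :=
      (le_add_right le_rfl).trans_eq (hγ i).2
    exact fun h => hUfin i (top_le_iff.1 (h ▸ hle))
  -- integrability facts on γ i
  have hint_cost : ∀ i, Integrable (fun p : Ed d × Ed d => ‖p.1 - p.2‖ ^ 2) (γ i) := by
    intro i
    refine ⟨((continuous_fst.sub continuous_snd).norm.pow 2).aestronglyMeasurable, ?_⟩
    rw [hasFiniteIntegral_iff_ofReal (ae_of_all _ fun p => sq_nonneg _)]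
    have h : ∀ p : Ed d × Ed d, ENNReal.ofReal (‖p.1 - p.2‖ ^ 2)
        = 2 * ENNReal.ofReal (‖p.1 - p.2‖ ^ 2 / 2) := by
      intro p
      have h2 : ‖p.1 - p.2‖ ^ 2 = 2 * (‖p.1 - p.2‖ ^ 2 / 2) := by ring
      rw [h2, ENNReal.ofReal_mul (by norm_num)]
      norm_num
    rw [lintegral_congr h, lintegral_const_mul' _ _ (by norm_num)]
    exact ENNReal.mul_lt_top (by norm_num) (hAfin i).lt_top
  have hint_x2 : ∀ i, Integrable (fun p : Ed d × Ed d => ‖p.1‖ ^ 2) (γ i) := by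
    intro i
    have h := hμ
    rw [← (hγ i).1] at h
    exact (integrable_map_measure (continuous_norm.pow 2).aestronglyMeasurable
      measurable_fst.aemeasurable).1 h
  have hint_y2 : ∀ i, Integrable (fun p : Ed d × Ed d => ‖p.2‖ ^ 2) (γ i) := by
    intro i
    refine Integrable.mono' (((hint_cost i).const_mul 2).add ((hint_x2 i).const_mul 2))
      (continuous_snd.norm.pow 2).aestronglyMeasurable (ae_of_all _ fun p => ?_)
    simp only [Pi.add_apply]
    rw [Real.norm_eq_abs, abs_of_nonneg (sq_nonneg _)]
    have h1 : ‖p.2‖ ≤ ‖p.1‖ + ‖p.1 - p.2‖ := by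
      have h2 := norm_sub_le p.1 (p.1 - p.2)
      have h3 : p.1 - (p.1 - p.2) = p.2 := by abel
      rwa [h3] at h2
    nlinarith [norm_nonneg (p.1 - p.2), norm_nonneg p.1, norm_nonneg p.2,
      sq_nonneg (‖p.1 - p.2‖ - ‖p.1‖)]
  have hint_y : ∀ i, Integrable (fun p : Ed d × Ed d => p.2) (γ i) := by
    intro i
    haveI := hprobγ i
    refine Integrable.mono' ((integrable_const (1 : ℝ)).add (hint_y2 i))
      continuous_snd.aestronglyMeasurable (ae_of_all _ fun p => ?_)
    simp only [Pi.add_apply]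
    nlinarith [sq_nonneg (‖p.2‖ - 1), norm_nonneg p.2]
  -- a.e. conditional integrability
  have hae_y : ∀ i, ∀ᵐ x ∂μ, Integrable (fun y => y) ((γ i).condKernel x) := by
    intro i
    have h := hint_y i
    rw [← (γ i).disintegrate (γ i).condKernel, hfstγ i] at h
    exact ((Measure.integrable_compProd_iff h.1).1 h).1
  have hae_y2 : ∀ i, ∀ᵐ x ∂μ, Integrable (fun y => ‖y‖ ^ 2) ((γ i).condKernel x) := by
    intro i
    have h := hint_y2 i
    rw [← (γ i).disintegrate (γ i).condKernel, hfstγ i] at h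
    exact ((Measure.integrable_compProd_iff h.1).1 h).1
  -- measurability of the maps
  have hTmeas : ∀ i, Measurable (T i) := by
    intro i
    have h : StronglyMeasurable fun x => ∫ y, (fun (_ : Ed d) (y : Ed d) => y) x y
        ∂(γ i).condKernel x :=
      StronglyMeasurable.integral_kernel_prod_right
        (show StronglyMeasurable fun p : Ed d × Ed d => p.2 from
          measurable_snd.stronglyMeasurable)
    have hTe : T i = fun x => ∫ y, y ∂(γ i).condKernel x := funext (hT i)
    rw [hTe]
    exact h.measurable
  have hTbarMeas : Measurable Tbar := by
    have hTe : Tbar = fun x => ∑ i, α i • T i x := funext hTbar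
    rw [hTe]
    exact Finset.measurable_sum _ fun i _ => (hTmeas i).const_smul (α i)
  set g : Ed d × Ed d → Ed d × Ed d := fun p => (Tbar p.1, p.2) with hg_def
  have hg : Measurable g := (hTbarMeas.comp measurable_fst).prodMk measurable_snd
  have hFT : Measurable fun p : Ed d × Ed d => ENNReal.ofReal (‖Tbar p.1 - p.2‖ ^ 2 / 2) :=
    (((((hTbarMeas.comp measurable_fst).sub measurable_snd).norm.pow_const 2).div_const
      2)).ennreal_ofReal
  have hFA : Measurable fun p : Ed d × Ed d => ENNReal.ofReal (‖p.1 - p.2‖ ^ 2 / 2) :=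
    ((((measurable_fst.sub measurable_snd).norm.pow_const 2).div_const 2)).ennreal_ofReal
  -- the candidate coupling bound
  have hUB : ∀ i, UOTcost τ (μ.map Tbar) (ν i)
      ≤ (∫⁻ p, ENNReal.ofReal (‖Tbar p.1 - p.2‖ ^ 2 / 2) ∂γ i)
        + ENNReal.ofReal τ * Dpsi ((γ i).map Prod.snd) (ν i) := by
    intro i
    have hmfst : ((γ i).map g).map Prod.fst = μ.map Tbar := by
      rw [Measure.map_map measurable_fst hg, ← (hγ i).1,
        Measure.map_map hTbarMeas measurable_fst]
      rfl
    have hmsnd : ((γ i).map g).map Prod.snd = (γ i).map Prod.snd := by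
      rw [Measure.map_map measurable_snd hg]
      rfl
    have hlint : ∫⁻ p, ENNReal.ofReal (‖p.1 - p.2‖ ^ 2 / 2) ∂((γ i).map g)
        = ∫⁻ p, ENNReal.ofReal (‖Tbar p.1 - p.2‖ ^ 2 / 2) ∂γ i := by
      rw [lintegral_map hFA hg]
    refine (iInf₂_le ((γ i).map g) hmfst).trans ?_
    rw [hlint, hmsnd]
  -- main inequality between transport terms
  have hmain : ∑ i, ENNReal.ofReal (α i)
        * ∫⁻ p, ENNReal.ofReal (‖Tbar p.1 - p.2‖ ^ 2 / 2) ∂γ i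
      ≤ ∑ i, ENNReal.ofReal (α i)
        * ∫⁻ p, ENNReal.ofReal (‖p.1 - p.2‖ ^ 2 / 2) ∂γ i := by
    have hrw : ∀ (i : Fin N) (F : Ed d × Ed d → ℝ≥0∞), Measurable F →
        ∫⁻ p, F p ∂γ i = ∫⁻ x, ∫⁻ y, F (x, y) ∂(γ i).condKernel x ∂μ := by
      intro i F hF
      rw [← Measure.lintegral_condKernel hF, hfstγ i]
    have hGT : ∀ i, Measurable fun x =>
        ∫⁻ y, ENNReal.ofReal (‖Tbar x - y‖ ^ 2 / 2) ∂(γ i).condKernel x :=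
      fun i => Measurable.lintegral_kernel_prod_right' hFT
    have hGA : ∀ i, Measurable fun x =>
        ∫⁻ y, ENNReal.ofReal (‖x - y‖ ^ 2 / 2) ∂(γ i).condKernel x :=
      fun i => Measurable.lintegral_kernel_prod_right' hFA
    calc ∑ i, ENNReal.ofReal (α i)
          * ∫⁻ p, ENNReal.ofReal (‖Tbar p.1 - p.2‖ ^ 2 / 2) ∂γ i
        = ∫⁻ x, ∑ i, ENNReal.ofReal (α i)
            * ∫⁻ y, ENNReal.ofReal (‖Tbar x - y‖ ^ 2 / 2) ∂(γ i).condKernel x ∂μ := by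
          rw [lintegral_finset_sum _ fun i _ => (hGT i).const_mul _]
          refine Finset.sum_congr rfl fun i _ => ?_
          rw [hrw i _ hFT, ← lintegral_const_mul _ (hGT i)]
      _ ≤ ∫⁻ x, ∑ i, ENNReal.ofReal (α i)
            * ∫⁻ y, ENNReal.ofReal (‖x - y‖ ^ 2 / 2) ∂(γ i).condKernel x ∂μ := by
          refine lintegral_mono_ae ?_
          filter_upwards [(ae_all_iff).2 hae_y, (ae_all_iff).2 hae_y2] with x hyx hy2x
          have hκprob : ∀ i, IsProbabilityMeasure ((γ i).condKernel x) :=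
            fun i => inferInstance
          -- integrability of quadratic integrands under each conditional measure
          have hIc : ∀ (c : Ed d) (i : Fin N),
              Integrable (fun y => ‖c - y‖ ^ 2 / 2) ((γ i).condKernel x) := by
            intro c i
            haveI := hκprob i
            refine Integrable.mono' ((integrable_const (‖c‖ ^ 2)).add (hy2x i))
              (((continuous_const.sub continuous_id).norm.pow 2).div_const
                2).aestronglyMeasurable (ae_of_all _ fun y => ?_)
            simp only [Pi.add_apply]
            rw [Real.norm_eq_abs, abs_of_nonneg (by positivity)]
            have h1 : ‖c - y‖ ≤ ‖c‖ + ‖y‖ := norm_sub_le _ _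
            nlinarith [norm_nonneg (c - y), norm_nonneg c, norm_nonneg y,
              sq_nonneg (‖c‖ - ‖y‖)]
          have hconv : ∀ (c : Ed d) (i : Fin N),
              ∫⁻ y, ENNReal.ofReal (‖c - y‖ ^ 2 / 2) ∂(γ i).condKernel x
                = ENNReal.ofReal (∫ y, ‖c - y‖ ^ 2 / 2 ∂(γ i).condKernel x) :=
            fun c i => (ofReal_integral_eq_lintegral_ofReal (hIc c i)
              (ae_of_all _ fun y => by positivity)).symm
          have hsum : ∀ c : Ed d,
              ∑ i, ENNReal.ofReal (α i)
                  * ∫⁻ y, ENNReal.ofReal (‖c - y‖ ^ 2 / 2) ∂(γ i).condKernel x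
                = ENNReal.ofReal
                    (∑ i, α i * ∫ y, ‖c - y‖ ^ 2 / 2 ∂(γ i).condKernel x) := by
            intro c
            rw [ENNReal.ofReal_sum_of_nonneg fun i _ => mul_nonneg (hα i)
              (integral_nonneg fun y => by positivity)]
            refine Finset.sum_congr rfl fun i _ => ?_
            rw [hconv c i, ← ENNReal.ofReal_mul (hα i)]
          rw [hsum (Tbar x), hsum x]
          refine ENNReal.ofReal_le_ofReal ?_
          refine aux_keyB α hα hαsum (fun i => (γ i).condKernel x) hκprob hyx hy2x x
            (Tbar x) ?_
          rw [hTbar x]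
          refine Finset.sum_congr rfl fun i _ => ?_
          rw [hT i x]
      _ = ∑ i, ENNReal.ofReal (α i)
            * ∫⁻ p, ENNReal.ofReal (‖p.1 - p.2‖ ^ 2 / 2) ∂γ i := by
          rw [lintegral_finset_sum _ fun i _ => (hGA i).const_mul _]
          refine Finset.sum_congr rfl fun i _ => ?_
          rw [hrw i _ hFA, ← lintegral_const_mul _ (hGA i)]
  -- assembling everything
  calc Vfun τ α ν (μ.map Tbar)
      = ∑ i, ENNReal.ofReal (α i) * UOTcost τ (μ.map Tbar) (ν i) := rfl
    _ ≤ ∑ i, ENNReal.ofReal (α i)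
          * ((∫⁻ p, ENNReal.ofReal (‖Tbar p.1 - p.2‖ ^ 2 / 2) ∂γ i)
            + ENNReal.ofReal τ * Dpsi ((γ i).map Prod.snd) (ν i)) :=
        Finset.sum_le_sum fun i _ => mul_le_mul_right (hUB i) _
    _ = (∑ i, ENNReal.ofReal (α i)
          * ∫⁻ p, ENNReal.ofReal (‖Tbar p.1 - p.2‖ ^ 2 / 2) ∂γ i)
        + ∑ i, ENNReal.ofReal (α i)
          * (ENNReal.ofReal τ * Dpsi ((γ i).map Prod.snd) (ν i)) := by
        rw [← Finset.sum_add_distrib]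
        exact Finset.sum_congr rfl fun i _ => mul_add _ _ _
    _ ≤ (∑ i, ENNReal.ofReal (α i)
          * ∫⁻ p, ENNReal.ofReal (‖p.1 - p.2‖ ^ 2 / 2) ∂γ i)
        + ∑ i, ENNReal.ofReal (α i)
          * (ENNReal.ofReal τ * Dpsi ((γ i).map Prod.snd) (ν i)) :=
        add_le_add_left hmain _
    _ = ∑ i, ENNReal.ofReal (α i)
          * ((∫⁻ p, ENNReal.ofReal (‖p.1 - p.2‖ ^ 2 / 2) ∂γ i)
            + ENNReal.ofReal τ * Dpsi ((γ i).map Prod.snd) (ν i)) := by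
        rw [← Finset.sum_add_distrib]
        exact Finset.sum_congr rfl fun i _ => (mul_add _ _ _).symm
    _ = ∑ i, ENNReal.ofReal (α i) * UOTcost τ μ (ν i) :=
        Finset.sum_congr rfl fun i _ => by rw [(hγ i).2]
    _ = Vfun τ α ν μ := rfl

end
end

section
/- Let d ≥ 1 and let μ, ν₁, …, ν_N be Borel probability measures on ℝ^d with finite second moments, α₁, …, α_N ≥ 0 with Σᵢ αᵢ = 1, and τ > 0. For each i, let γᵢ be a coupling attaining the infimum defining W²_{2,ub}(μ, νᵢ), with disintegration γᵢ = μ ⊗ γ_{i,x}, conditional means Tᵢ(x) = ∫ y dγ_{i,x}(y), and T̄(x) = Σᵢ αᵢ Tᵢ(x). Then, with V(ρ) = Σᵢ αᵢ W²_{2,ub}(ρ, νᵢ), one has V(μ) − V(T̄_#μ) ≥ ½ ∫ ‖x − T̄(x)‖² dμ(x) ≥ 0. -/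
open MeasureTheory ENNReal

noncomputable section

open RealInnerProductSpace

/-- The divergence of a measure against itself vanishes. -/
lemma Dpsi_self {d : ℕ} (ν : Measure (Ed d)) [SigmaFinite ν] : Dpsi ν ν = 0 := by
  classical
  rw [Dpsi, if_pos (Measure.AbsolutelyContinuous.refl ν)]
  have h : (fun y => ENNReal.ofReal (entropyPsi ((ν.rnDeriv ν) y).toReal)) =ᵐ[ν]
      (fun _ => 0) := by
    filter_upwards [Measure.rnDeriv_self ν] with y hy
    simp [hy, entropyPsi]
  rw [lintegral_congr_ae h, lintegral_zero]

set_option maxHeartbeats 2000000 in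
theorem averageMap_objective_gap_lower_bound
    {d N : ℕ} (hd : 1 ≤ d) (τ : ℝ) (hτ : 0 < τ)
    (μ : Measure (Ed d)) [IsProbabilityMeasure μ]
    (hμ : Integrable (fun x => ‖x‖ ^ 2) μ)
    (ν : Fin N → Measure (Ed d)) [∀ i, IsProbabilityMeasure (ν i)]
    (hν : ∀ i, Integrable (fun x => ‖x‖ ^ 2) (ν i))
    (α : Fin N → ℝ) (hα : ∀ i, 0 ≤ α i) (hαsum : ∑ i, α i = 1)
    (γ : Fin N → Measure (Ed d × Ed d)) [∀ i, IsFiniteMeasure (γ i)]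
    (hγ : ∀ i, IsOptimalCoupling τ μ (ν i) (γ i))
    (T : Fin N → Ed d → Ed d)
    (hT : ∀ i x, T i x = ∫ y, y ∂((γ i).condKernel x))
    (Tbar : Ed d → Ed d)
    (hTbar : ∀ x, Tbar x = ∑ i, α i • T i x) :
    (∫⁻ x, ENNReal.ofReal (‖x - Tbar x‖ ^ 2 / 2) ∂μ)
        ≤ Vfun τ α ν μ - Vfun τ α ν (μ.map Tbar) ∧
      (0 : ℝ≥0∞) ≤ ∫⁻ x, ENNReal.ofReal (‖x - Tbar x‖ ^ 2 / 2) ∂μ := by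
  classical
  refine ⟨?_, zero_le⟩
  -- basic facts
  have hfst : ∀ i, (γ i).fst = μ := fun i => (hγ i).1
  -- measurability of the maps
  have hTm : ∀ i, Measurable (T i) := by
    intro i
    have hTe : T i = fun x => ∫ y, y ∂((γ i).condKernel x) := funext (hT i)
    rw [hTe]
    exact (MeasureTheory.StronglyMeasurable.integral_kernel_prod_right'
      (κ := (γ i).condKernel) measurable_snd.stronglyMeasurable).measurable
  have hTbarm : Measurable Tbar := by
    have hTe : Tbar = fun x => ∑ i, α i • T i x := funext hTbar
    rw [hTe]
    exact Finset.measurable_sum _ fun i _ => (hTm i).const_smul (α i)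
  -- measurable cost integrands
  have m1 : Measurable fun p : Ed d × Ed d => ENNReal.ofReal (‖p.1 - p.2‖ ^ 2 / 2) :=
    ((((measurable_fst.sub measurable_snd).norm.pow_const 2).div_const 2)).ennreal_ofReal
  have m5 : Measurable fun p : Ed d × Ed d => ENNReal.ofReal (‖Tbar p.1 - p.2‖ ^ 2 / 2) :=
    (((((hTbarm.comp measurable_fst).sub measurable_snd).norm.pow_const 2).div_const
      2)).ennreal_ofReal
  have m3 : Measurable fun p : Ed d × Ed d => ENNReal.ofReal (‖p.2‖ ^ 2) :=
    (measurable_snd.norm.pow_const 2).ennreal_ofReal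
  have mA : Measurable fun x : Ed d => ENNReal.ofReal (‖x - Tbar x‖ ^ 2 / 2) :=
    (((measurable_id.sub hTbarm).norm.pow_const 2).div_const 2).ennreal_ofReal
  have m4 : Measurable fun x : Ed d => ENNReal.ofReal (‖x‖ ^ 2) :=
    (measurable_norm.pow_const 2).ennreal_ofReal
  have m2 : Measurable fun p : Ed d × Ed d => ENNReal.ofReal (‖p.1‖ ^ 2) :=
    (measurable_fst.norm.pow_const 2).ennreal_ofReal
  have hmarg1 : ∀ ρ : Measure (Ed d × Ed d),
      ∫⁻ p, ENNReal.ofReal (‖p.1‖ ^ 2) ∂ρ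
        = ∫⁻ x, ENNReal.ofReal (‖x‖ ^ 2) ∂(ρ.map Prod.fst) := fun ρ =>
    (lintegral_map m4 measurable_fst).symm
  have hmarg2 : ∀ ρ : Measure (Ed d × Ed d),
      ∫⁻ p, ENNReal.ofReal (‖p.2‖ ^ 2) ∂ρ
        = ∫⁻ y, ENNReal.ofReal (‖y‖ ^ 2) ∂(ρ.map Prod.snd) := fun ρ =>
    (lintegral_map m4 measurable_snd).symm
  -- finiteness of second moments
  have hμ2 : ∫⁻ x, ENNReal.ofReal (‖x‖ ^ 2) ∂μ < ⊤ :=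
    (hasFiniteIntegral_iff_ofReal (Filter.Eventually.of_forall fun x => sq_nonneg _)).1 hμ.2
  have hν2 : ∀ i, ∫⁻ x, ENNReal.ofReal (‖x‖ ^ 2) ∂(ν i) < ⊤ := fun i =>
    (hasFiniteIntegral_iff_ofReal (Filter.Eventually.of_forall fun x => sq_nonneg _)).1 (hν i).2
  -- the optimal cost is finite
  have hUOTlt : ∀ i, UOTcost τ μ (ν i) < ⊤ := by
    intro i
    have hfsteq : (μ.prod (ν i)).map Prod.fst = μ := Measure.fst_prod
    have hle : UOTcost τ μ (ν i) ≤
        (∫⁻ p, ENNReal.ofReal (‖p.1 - p.2‖ ^ 2 / 2) ∂(μ.prod (ν i)))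
          + ENNReal.ofReal τ * Dpsi ((μ.prod (ν i)).map Prod.snd) (ν i) :=
      iInf₂_le (μ.prod (ν i)) hfsteq
    have hsnd : (μ.prod (ν i)).map Prod.snd = ν i := Measure.snd_prod
    rw [hsnd, Dpsi_self, mul_zero, add_zero] at hle
    refine hle.trans_lt ?_
    have hbound : ∀ p : Ed d × Ed d, ENNReal.ofReal (‖p.1 - p.2‖ ^ 2 / 2)
        ≤ ENNReal.ofReal (‖p.1‖ ^ 2) + ENNReal.ofReal (‖p.2‖ ^ 2) := by
      intro p
      rw [← ENNReal.ofReal_add (sq_nonneg _) (sq_nonneg _)]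
      apply ENNReal.ofReal_le_ofReal
      have h := pow_le_pow_left₀ (norm_nonneg _) (norm_sub_le p.1 p.2) 2
      nlinarith [h, sq_nonneg (‖p.1‖ - ‖p.2‖)]
    calc ∫⁻ p, ENNReal.ofReal (‖p.1 - p.2‖ ^ 2 / 2) ∂(μ.prod (ν i))
        ≤ ∫⁻ p, (ENNReal.ofReal (‖p.1‖ ^ 2) + ENNReal.ofReal (‖p.2‖ ^ 2)) ∂(μ.prod (ν i)) :=
          lintegral_mono hbound
      _ = (∫⁻ p, ENNReal.ofReal (‖p.1‖ ^ 2) ∂(μ.prod (ν i)))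
            + ∫⁻ p, ENNReal.ofReal (‖p.2‖ ^ 2) ∂(μ.prod (ν i)) :=
          lintegral_add_left m2 _
      _ = (∫⁻ x, ENNReal.ofReal (‖x‖ ^ 2) ∂μ) + ∫⁻ y, ENNReal.ofReal (‖y‖ ^ 2) ∂(ν i) := by
          rw [hmarg1 (μ.prod (ν i)), hmarg2 (μ.prod (ν i)), hfsteq, hsnd]
      _ < ⊤ := ENNReal.add_lt_top.2 ⟨hμ2, hν2 i⟩
  -- notation for the three ENNReal-valued quantities
  set A : ℝ≥0∞ := ∫⁻ x, ENNReal.ofReal (‖x - Tbar x‖ ^ 2 / 2) ∂μ with hA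
  set C : Fin N → ℝ≥0∞ := fun i => ∫⁻ p, ENNReal.ofReal (‖p.1 - p.2‖ ^ 2 / 2) ∂(γ i) with hC
  set C' : Fin N → ℝ≥0∞ :=
    fun i => ∫⁻ p, ENNReal.ofReal (‖Tbar p.1 - p.2‖ ^ 2 / 2) ∂(γ i) with hC'
  set D : Fin N → ℝ≥0∞ :=
    fun i => ENNReal.ofReal τ * Dpsi ((γ i).map Prod.snd) (ν i) with hD
  have hopt : ∀ i, C i + D i = UOTcost τ μ (ν i) := fun i => (hγ i).2
  have hClt : ∀ i, C i < ⊤ := fun i =>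
    lt_of_le_of_lt (le_trans le_self_add (hopt i).le) (hUOTlt i)
  have hDlt : ∀ i, D i < ⊤ := fun i =>
    lt_of_le_of_lt (le_trans le_add_self (hopt i).le) (hUOTlt i)
  -- second moment of second marginal of γ i
  have hmargfst : ∀ i, ∫⁻ p, ENNReal.ofReal (‖p.1‖ ^ 2) ∂(γ i)
      = ∫⁻ x, ENNReal.ofReal (‖x‖ ^ 2) ∂μ := by
    intro i
    rw [hmarg1 (γ i), (hγ i).1]
  have hN2 : ∀ i, ∫⁻ p, ENNReal.ofReal (‖p.2‖ ^ 2) ∂(γ i) < ⊤ := by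
    intro i
    have hbound : ∀ p : Ed d × Ed d, ENNReal.ofReal (‖p.2‖ ^ 2)
        ≤ 4 * ENNReal.ofReal (‖p.1 - p.2‖ ^ 2 / 2) + 2 * ENNReal.ofReal (‖p.1‖ ^ 2) := by
      intro p
      calc ENNReal.ofReal (‖p.2‖ ^ 2)
          ≤ ENNReal.ofReal (4 * (‖p.1 - p.2‖ ^ 2 / 2) + 2 * ‖p.1‖ ^ 2) := by
            apply ENNReal.ofReal_le_ofReal
            have h : ‖p.2‖ ≤ ‖p.1‖ + ‖p.1 - p.2‖ := by
              have h0 := norm_sub_le p.1 (p.1 - p.2)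
              simpa using h0
            nlinarith [pow_le_pow_left₀ (norm_nonneg p.2) h 2,
              sq_nonneg (‖p.1‖ - ‖p.1 - p.2‖)]
        _ = 4 * ENNReal.ofReal (‖p.1 - p.2‖ ^ 2 / 2) + 2 * ENNReal.ofReal (‖p.1‖ ^ 2) := by
            rw [ENNReal.ofReal_add (by positivity) (by positivity),
              ENNReal.ofReal_mul (by norm_num), ENNReal.ofReal_mul (by norm_num)]
            norm_num
    calc ∫⁻ p, ENNReal.ofReal (‖p.2‖ ^ 2) ∂(γ i)
        ≤ ∫⁻ p, (4 * ENNReal.ofReal (‖p.1 - p.2‖ ^ 2 / 2)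
            + 2 * ENNReal.ofReal (‖p.1‖ ^ 2)) ∂(γ i) := lintegral_mono hbound
      _ = 4 * C i + 2 * ∫⁻ p, ENNReal.ofReal (‖p.1‖ ^ 2) ∂(γ i) := by
          rw [lintegral_add_left (m1.const_mul 4), lintegral_const_mul 4 m1,
            lintegral_const_mul 2 m2]
      _ < ⊤ := by
          rw [hmargfst i]
          exact ENNReal.add_lt_top.2 ⟨ENNReal.mul_lt_top (by norm_num) (hClt i),
            ENNReal.mul_lt_top (by norm_num) hμ2⟩
  -- conditional kernel representations
  have hCcond : ∀ i, ∫⁻ x, ∫⁻ y, ENNReal.ofReal (‖x - y‖ ^ 2 / 2) ∂((γ i).condKernel x) ∂μ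
      = C i := by
    intro i
    have h := Measure.lintegral_condKernel (ρ := γ i) m1
    rw [hfst i] at h
    exact h
  have hC'cond : ∀ i, ∫⁻ x, ∫⁻ y, ENNReal.ofReal (‖Tbar x - y‖ ^ 2 / 2) ∂((γ i).condKernel x) ∂μ
      = C' i := by
    intro i
    have h := Measure.lintegral_condKernel (ρ := γ i) m5
    rw [hfst i] at h
    exact h
  have hYcond : ∀ i, ∫⁻ x, ∫⁻ y, ENNReal.ofReal (‖y‖ ^ 2) ∂((γ i).condKernel x) ∂μ
      = ∫⁻ p, ENNReal.ofReal (‖p.2‖ ^ 2) ∂(γ i) := by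
    intro i
    have h := Measure.lintegral_condKernel (ρ := γ i) m3
    rw [hfst i] at h
    exact h
  -- a.e. integrability of the conditional second moments
  have haeI : ∀ᵐ x ∂μ, ∀ i, Integrable (fun y => ‖y‖ ^ 2) ((γ i).condKernel x) := by
    rw [ae_all_iff]
    intro i
    have hfin : ∀ᵐ x ∂μ, (∫⁻ y, ENNReal.ofReal (‖y‖ ^ 2) ∂((γ i).condKernel x)) < ⊤ := by
      refine ae_lt_top (Measurable.lintegral_kernel_prod_right' m3) ?_
      rw [hYcond i]
      exact (hN2 i).ne
    filter_upwards [hfin] with x hx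
    refine ⟨(measurable_norm.pow_const 2).aestronglyMeasurable, ?_⟩
    rw [hasFiniteIntegral_iff_ofReal (Filter.Eventually.of_forall fun y => sq_nonneg _)]
    exact hx
  -- the key a.e. pointwise (in x) inequality
  have hmain : ∀ᵐ x ∂μ,
      ENNReal.ofReal (‖x - Tbar x‖ ^ 2 / 2)
        + ∑ i, ENNReal.ofReal (α i)
            * ∫⁻ y, ENNReal.ofReal (‖Tbar x - y‖ ^ 2 / 2) ∂((γ i).condKernel x)
      ≤ ∑ i, ENNReal.ofReal (α i)
            * ∫⁻ y, ENNReal.ofReal (‖x - y‖ ^ 2 / 2) ∂((γ i).condKernel x) := by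
    filter_upwards [haeI] with x hx
    have hyint : ∀ i, Integrable (fun y : Ed d => y) ((γ i).condKernel x) := by
      intro i
      refine Integrable.mono' (((integrable_const (1 : ℝ)).add (hx i)).div_const 2)
        aestronglyMeasurable_id (Filter.Eventually.of_forall fun y => ?_)
      have h : ‖y‖ ≤ (1 + ‖y‖ ^ 2) / 2 := by nlinarith [sq_nonneg (‖y‖ - 1), norm_nonneg y]
      simpa [Pi.add_apply] using h
    have hsq : ∀ (c : Ed d) i, Integrable (fun y => ‖c - y‖ ^ 2 / 2) ((γ i).condKernel x) := by
      intro c i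
      refine Integrable.mono' ((integrable_const (‖c‖ ^ 2)).add (hx i))
        ((((continuous_const.sub continuous_id).norm.pow 2).div_const
          2).aestronglyMeasurable) (Filter.Eventually.of_forall fun y => ?_)
      simp only [Pi.add_apply]
      rw [Real.norm_eq_abs, abs_of_nonneg (by positivity)]
      have h := pow_le_pow_left₀ (norm_nonneg _) (norm_sub_le c y) 2
      nlinarith [h, sq_nonneg (‖c‖ - ‖y‖)]
    have hofa : ∀ (c : Ed d) i, (∫⁻ y, ENNReal.ofReal (‖c - y‖ ^ 2 / 2) ∂((γ i).condKernel x))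
        = ENNReal.ofReal (∫ y, ‖c - y‖ ^ 2 / 2 ∂((γ i).condKernel x)) := fun c i =>
      (ofReal_integral_eq_lintegral_ofReal (hsq c i)
        (Filter.Eventually.of_forall fun y => by positivity)).symm
    -- conditional decomposition
    have hdecomp : ∀ i, ∫ y, ‖x - y‖ ^ 2 / 2 ∂((γ i).condKernel x)
        = ‖x - Tbar x‖ ^ 2 / 2 + ⟪x - Tbar x, Tbar x - T i x⟫
          + ∫ y, ‖Tbar x - y‖ ^ 2 / 2 ∂((γ i).condKernel x) := by
      intro i
      have hsub : Integrable (fun y : Ed d => Tbar x - y) ((γ i).condKernel x) :=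
        (integrable_const (Tbar x)).sub (hyint i)
      have hii : Integrable (fun y : Ed d => ⟪x - Tbar x, Tbar x - y⟫) ((γ i).condKernel x) :=
        Integrable.const_inner _ hsub
      have hint1 : Integrable
          (fun y : Ed d => ‖x - Tbar x‖ ^ 2 / 2 + ⟪x - Tbar x, Tbar x - y⟫)
          ((γ i).condKernel x) := (integrable_const _).add hii
      have hrw : (fun y : Ed d => ‖x - y‖ ^ 2 / 2)
          = fun y => (‖x - Tbar x‖ ^ 2 / 2 + ⟪x - Tbar x, Tbar x - y⟫) + ‖Tbar x - y‖ ^ 2 / 2 := by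
        funext y
        have hxy : x - y = (x - Tbar x) + (Tbar x - y) := by abel
        rw [hxy, norm_add_sq_real]
        ring
      rw [hrw, integral_add hint1 (hsq (Tbar x) i),
        integral_add (integrable_const _) hii,
        integral_inner hsub,
        integral_sub (integrable_const _) (hyint i), ← hT i x]
      simp [measure_univ]
    -- the cross terms cancel
    have hcross : ∑ i, α i * ⟪x - Tbar x, Tbar x - T i x⟫ = 0 := by
      have h1 : ∀ i, α i * ⟪x - Tbar x, Tbar x - T i x⟫
          = ⟪x - Tbar x, α i • (Tbar x - T i x)⟫ := fun i =>
        (real_inner_smul_right _ _ _).symm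
      rw [Finset.sum_congr rfl fun i _ => h1 i, ← inner_sum]
      have hzero : ∑ i, α i • (Tbar x - T i x) = 0 := by
        simp_rw [smul_sub]
        rw [Finset.sum_sub_distrib, ← Finset.sum_smul, hαsum, one_smul, hTbar x]
        exact sub_self _
      rw [hzero, inner_zero_right]
    -- real-valued identity
    have hreal : ‖x - Tbar x‖ ^ 2 / 2
          + ∑ i, α i * ∫ y, ‖Tbar x - y‖ ^ 2 / 2 ∂((γ i).condKernel x)
        = ∑ i, α i * ∫ y, ‖x - y‖ ^ 2 / 2 ∂((γ i).condKernel x) := by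
      have hexp : ∀ i, α i * ∫ y, ‖x - y‖ ^ 2 / 2 ∂((γ i).condKernel x)
          = α i * (‖x - Tbar x‖ ^ 2 / 2) + α i * ⟪x - Tbar x, Tbar x - T i x⟫
            + α i * ∫ y, ‖Tbar x - y‖ ^ 2 / 2 ∂((γ i).condKernel x) := by
        intro i; rw [hdecomp i]; ring
      rw [Finset.sum_congr rfl fun i _ => hexp i, Finset.sum_add_distrib,
        Finset.sum_add_distrib, hcross, ← Finset.sum_mul, hαsum]
      ring
    -- pass to ENNReal
    have e2 : ∀ (c : Ed d) i, 0 ≤ ∫ y, ‖c - y‖ ^ 2 / 2 ∂((γ i).condKernel x) := fun c i =>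
      integral_nonneg fun y => by positivity
    have eofs : ∀ (c : Ed d), ∑ i, ENNReal.ofReal (α i)
          * ∫⁻ y, ENNReal.ofReal (‖c - y‖ ^ 2 / 2) ∂((γ i).condKernel x)
        = ENNReal.ofReal (∑ i, α i * ∫ y, ‖c - y‖ ^ 2 / 2 ∂((γ i).condKernel x)) := by
      intro c
      rw [ENNReal.ofReal_sum_of_nonneg fun i _ => mul_nonneg (hα i) (e2 c i)]
      refine Finset.sum_congr rfl fun i _ => ?_
      rw [hofa c i, ← ENNReal.ofReal_mul (hα i)]
    rw [eofs x, eofs (Tbar x), ← ENNReal.ofReal_add (by positivity)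
      (Finset.sum_nonneg fun i _ => mul_nonneg (hα i) (e2 (Tbar x) i)), hreal]
  -- integrate the a.e. inequality
  have hcore : A + ∑ i, ENNReal.ofReal (α i) * C' i ≤ ∑ i, ENNReal.ofReal (α i) * C i := by
    have hGm : ∀ (g : Ed d × Ed d → ℝ≥0∞), Measurable g → ∀ i : Fin N,
        Measurable fun x => ∫⁻ y, g (x, y) ∂((γ i).condKernel x) := fun g hg i =>
      Measurable.lintegral_kernel_prod_right' hg
    calc A + ∑ i, ENNReal.ofReal (α i) * C' i
        = ∫⁻ x, (ENNReal.ofReal (‖x - Tbar x‖ ^ 2 / 2)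
            + ∑ i, ENNReal.ofReal (α i)
              * ∫⁻ y, ENNReal.ofReal (‖Tbar x - y‖ ^ 2 / 2) ∂((γ i).condKernel x)) ∂μ := by
          rw [lintegral_add_left mA, lintegral_finset_sum _ fun i _ =>
            (hGm _ m5 i).const_mul _]
          congr 1
          refine Finset.sum_congr rfl fun i _ => ?_
          rw [lintegral_const_mul _ (hGm _ m5 i), hC'cond i]
      _ ≤ ∫⁻ x, (∑ i, ENNReal.ofReal (α i)
            * ∫⁻ y, ENNReal.ofReal (‖x - y‖ ^ 2 / 2) ∂((γ i).condKernel x)) ∂μ :=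
          lintegral_mono_ae hmain
      _ = ∑ i, ENNReal.ofReal (α i) * C i := by
          rw [lintegral_finset_sum _ fun i _ => (hGm _ m1 i).const_mul _]
          refine Finset.sum_congr rfl fun i _ => ?_
          rw [lintegral_const_mul _ (hGm _ m1 i), hCcond i]
  -- the transported plan bounds the cost at μ.map Tbar
  have hVT : Vfun τ α ν (μ.map Tbar) ≤ ∑ i, ENNReal.ofReal (α i) * (C' i + D i) := by
    refine Finset.sum_le_sum fun i _ => mul_le_mul_right ?_ _
    set e : Ed d × Ed d → Ed d × Ed d := fun p => (Tbar p.1, p.2) with he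
    have hem : Measurable e := (hTbarm.comp measurable_fst).prodMk measurable_snd
    set π : Measure (Ed d × Ed d) := (γ i).map e with hπ
    have hπfst : π.map Prod.fst = μ.map Tbar := by
      rw [hπ, Measure.map_map measurable_fst hem,
        show Prod.fst ∘ e = Tbar ∘ Prod.fst from rfl,
        ← Measure.map_map hTbarm measurable_fst, (hγ i).1]
    have hπsnd : π.map Prod.snd = (γ i).map Prod.snd := by
      rw [hπ, Measure.map_map measurable_snd hem]
      rfl
    have hπcost : (∫⁻ p, ENNReal.ofReal (‖p.1 - p.2‖ ^ 2 / 2) ∂π) = C' i := by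
      rw [hπ, lintegral_map m1 hem]
    calc UOTcost τ (μ.map Tbar) (ν i)
        ≤ (∫⁻ p, ENNReal.ofReal (‖p.1 - p.2‖ ^ 2 / 2) ∂π)
            + ENNReal.ofReal τ * Dpsi (π.map Prod.snd) (ν i) := iInf₂_le π hπfst
      _ = C' i + D i := by rw [hπcost, hπsnd, hD]
  -- finiteness bookkeeping
  have hSC : ∑ i, ENNReal.ofReal (α i) * C i ≠ ⊤ :=
    (ENNReal.sum_lt_top.2 fun i _ => ENNReal.mul_lt_top ENNReal.ofReal_lt_top (hClt i)).ne
  have hSD : ∑ i, ENNReal.ofReal (α i) * D i ≠ ⊤ :=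
    (ENNReal.sum_lt_top.2 fun i _ => ENNReal.mul_lt_top ENNReal.ofReal_lt_top (hDlt i)).ne
  have hSC' : ∑ i, ENNReal.ofReal (α i) * C' i ≠ ⊤ :=
    (lt_of_le_of_lt (le_trans le_add_self hcore) (lt_of_le_of_ne le_top hSC)).ne
  have hsplit : ∑ i, ENNReal.ofReal (α i) * (C' i + D i)
      = (∑ i, ENNReal.ofReal (α i) * C' i) + ∑ i, ENNReal.ofReal (α i) * D i := by
    rw [← Finset.sum_add_distrib]
    exact Finset.sum_congr rfl fun i _ => mul_add _ _ _
  have hVTne : Vfun τ α ν (μ.map Tbar) ≠ ⊤ := by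
    refine ne_top_of_le_ne_top ?_ (hVT.trans_eq hsplit)
    exact ENNReal.add_ne_top.2 ⟨hSC', hSD⟩
  have hVμ : Vfun τ α ν μ
      = (∑ i, ENNReal.ofReal (α i) * C i) + ∑ i, ENNReal.ofReal (α i) * D i := by
    rw [← Finset.sum_add_distrib]
    exact Finset.sum_congr rfl fun i _ => by rw [← hopt i, mul_add]
  refine ENNReal.le_sub_of_add_le_right hVTne ?_
  calc A + Vfun τ α ν (μ.map Tbar)
      ≤ A + ((∑ i, ENNReal.ofReal (α i) * C' i) + ∑ i, ENNReal.ofReal (α i) * D i) :=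
        add_le_add_right (hVT.trans_eq hsplit) A
    _ = (A + ∑ i, ENNReal.ofReal (α i) * C' i) + ∑ i, ENNReal.ofReal (α i) * D i :=
        (add_assoc _ _ _).symm
    _ ≤ (∑ i, ENNReal.ofReal (α i) * C i) + ∑ i, ENNReal.ofReal (α i) * D i :=
        add_le_add_left hcore _
    _ = Vfun τ α ν μ := hVμ.symm

end
end

section
/- Let d ≥ 1, let μ be a Borel probability measure on ℝ^d with finite second moment, and for i = 1, …, N let γᵢ be Borel probability measures on ℝ^d × ℝ^d whose first marginal is μ, each with finite second moment, with disintegrations γᵢ = μ ⊗ γ_{i,x}, conditional means Tᵢ(x) = ∫ y dγ_{i,x}(y), weights αᵢ ≥ 0 summing to 1, and T̄(x) = Σᵢ αᵢ Tᵢ(x). Then Σᵢ αᵢ ∫ ‖x − y‖² dγᵢ(x,y) = ∫ ‖x − T̄(x)‖² dμ(x) + Σᵢ αᵢ ∫ ‖T̄(x) − y‖² dγᵢ(x,y). In particular Σᵢ αᵢ ∫ ‖x − y‖² dγᵢ(x,y) ≥ Σᵢ αᵢ ∫ ‖T̄(x) − y‖² dγᵢ(x,y). -/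
open MeasureTheory ENNReal

noncomputable section

open scoped RealInnerProductSpace

lemma integrable_inner_of_memL2 {α : Type*} [MeasurableSpace α] {μ : Measure α} {d : ℕ}
    {f h : α → Ed d} (hf : MemLp f 2 μ) (hh : MemLp h 2 μ) :
    Integrable (fun x => ⟪f x, h x⟫) μ := by
  refine ((hf.norm.integrable_sq).add (hh.norm.integrable_sq)).mono'
    (hf.1.inner hh.1) ?_
  filter_upwards with x
  simp only [Pi.add_apply]
  rw [Real.norm_eq_abs]
  nlinarith [norm_nonneg (f x), norm_nonneg (h x), abs_real_inner_le_norm (f x) (h x),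
    sq_nonneg (‖f x‖ - ‖h x‖)]

lemma jensen_sq {d : ℕ} (P : Measure (Ed d)) [IsProbabilityMeasure P]
    (h : Integrable (fun y => ‖y‖ ^ 2) P) : ‖∫ y, y ∂P‖ ^ 2 ≤ ∫ y, ‖y‖ ^ 2 ∂P := by
  have hn : MemLp (fun y : Ed d => ‖y‖) 2 P :=
    (memLp_two_iff_integrable_sq continuous_norm.aestronglyMeasurable).2 h
  have h1 : ‖∫ y, y ∂P‖ ≤ ∫ y, ‖y‖ ∂P := norm_integral_le_integral_norm _
  have hv := ProbabilityTheory.variance_nonneg (fun y : Ed d => ‖y‖) P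
  rw [ProbabilityTheory.variance_eq_sub hn] at hv
  have he : ∫ x, ((fun y : Ed d => ‖y‖) ^ 2) x ∂P = ∫ y, ‖y‖ ^ 2 ∂P := by
    apply integral_congr_ae; filter_upwards with y; simp [Pi.pow_apply]
  rw [he] at hv
  have h2 : ‖∫ y, y ∂P‖ ^ 2 ≤ (∫ y, ‖y‖ ∂P) ^ 2 := by
    apply pow_le_pow_left₀ (norm_nonneg _) h1
  linarith

theorem averageMap_transport_cost_identity
    {d N : ℕ} (hd : 1 ≤ d)
    (μ : Measure (Ed d)) [IsProbabilityMeasure μ]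
    (hμ : Integrable (fun x => ‖x‖ ^ 2) μ)
    (γ : Fin N → Measure (Ed d × Ed d)) [∀ i, IsProbabilityMeasure (γ i)]
    (hfst : ∀ i, (γ i).map Prod.fst = μ)
    (hmom : ∀ i, Integrable (fun p : Ed d × Ed d => ‖p.1‖ ^ 2 + ‖p.2‖ ^ 2) (γ i))
    (α : Fin N → ℝ) (hα : ∀ i, 0 ≤ α i) (hαsum : ∑ i, α i = 1)
    (T : Fin N → Ed d → Ed d)
    (hT : ∀ i x, T i x = ∫ y, y ∂((γ i).condKernel x))
    (Tbar : Ed d → Ed d)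
    (hTbar : ∀ x, Tbar x = ∑ i, α i • T i x) :
    (∑ i, α i * ∫ p, ‖p.1 - p.2‖ ^ 2 ∂(γ i))
        = (∫ x, ‖x - Tbar x‖ ^ 2 ∂μ)
          + ∑ i, α i * ∫ p, ‖Tbar p.1 - p.2‖ ^ 2 ∂(γ i) ∧
      (∑ i, α i * ∫ p, ‖Tbar p.1 - p.2‖ ^ 2 ∂(γ i))
        ≤ ∑ i, α i * ∫ p, ‖p.1 - p.2‖ ^ 2 ∂(γ i) := by
  classical
  have hfstμ : ∀ i, (γ i).fst = μ := fun i => hfst i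
  -- second-coordinate moments
  have hsnd_sq : ∀ i, Integrable (fun p : Ed d × Ed d => ‖p.2‖ ^ 2) (γ i) := by
    intro i
    refine (hmom i).mono' ((continuous_snd.norm.pow 2).aestronglyMeasurable) ?_
    filter_upwards with p
    rw [Real.norm_eq_abs, abs_of_nonneg (by positivity)]
    nlinarith [sq_nonneg ‖p.1‖]
  have hsnd_mem : ∀ i, MemLp (fun p : Ed d × Ed d => p.2) 2 (γ i) := fun i =>
    (memLp_two_iff_integrable_sq_norm continuous_snd.aestronglyMeasurable).2 (hsnd_sq i)
  have hsnd_int : ∀ i, Integrable (fun p : Ed d × Ed d => p.2) (γ i) := fun i =>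
    (hsnd_mem i).integrable one_le_two
  -- measurability of T i
  have hT_aesm : ∀ i, AEStronglyMeasurable (T i) μ := by
    intro i
    have h := (hsnd_int i).1.integral_condKernel
    rw [hfstμ i] at h
    have hTe : T i = fun x => ∫ y, y ∂((γ i).condKernel x) := funext (hT i)
    rw [hTe]; exact h
  -- conditional second moments
  have hκ_sq : ∀ i, ∀ᵐ x ∂μ, Integrable (fun y : Ed d => ‖y‖ ^ 2) ((γ i).condKernel x) := by
    intro i
    have h := (hsnd_sq i).condKernel_ae
    rw [hfstμ i] at h
    exact h
  have hTsq_int : ∀ i, Integrable (fun x => ‖T i x‖ ^ 2) μ := by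
    intro i
    have hI : Integrable (fun x => ∫ y, ‖y‖ ^ 2 ∂((γ i).condKernel x)) μ := by
      have h := (hsnd_sq i).integral_condKernel
      rw [hfstμ i] at h; exact h
    refine hI.mono' ((hT_aesm i).norm.pow 2) ?_
    filter_upwards [hκ_sq i] with x hx
    rw [Real.norm_eq_abs, abs_of_nonneg (by positivity), hT i x]
    exact jensen_sq _ hx
  have hT_mem : ∀ i, MemLp (T i) 2 μ := fun i =>
    (memLp_two_iff_integrable_sq_norm (hT_aesm i)).2 (hTsq_int i)
  have hTbar_mem : MemLp Tbar 2 μ := by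
    have h : Tbar = fun x => ∑ i, α i • T i x := funext hTbar
    rw [h]
    exact memLp_finset_sum _ (fun i _ => (hT_mem i).const_smul (α i))
  have hid_mem : MemLp (fun x : Ed d => x) 2 μ :=
    (memLp_two_iff_integrable_sq_norm aestronglyMeasurable_id).2 hμ
  have hg_mem : MemLp (fun x : Ed d => x - Tbar x) 2 μ := hid_mem.sub hTbar_mem
  have hg_aesm : AEStronglyMeasurable (fun x : Ed d => x - Tbar x) μ := hg_mem.1
  -- lifts to γ i
  have hgf_mem : ∀ i, MemLp (fun p : Ed d × Ed d => p.1 - Tbar p.1) 2 (γ i) := by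
    intro i
    have h1 : MemLp (fun x : Ed d => x - Tbar x) 2 ((γ i).map Prod.fst) := by
      rw [hfst i]; exact hg_mem
    exact (memLp_map_measure_iff (by rw [hfst i]; exact hg_aesm)
      measurable_fst.aemeasurable).1 h1
  have hTbarf_mem : ∀ i, MemLp (fun p : Ed d × Ed d => Tbar p.1) 2 (γ i) := by
    intro i
    have h1 : MemLp Tbar 2 ((γ i).map Prod.fst) := by rw [hfst i]; exact hTbar_mem
    exact (memLp_map_measure_iff (by rw [hfst i]; exact hTbar_mem.1)
      measurable_fst.aemeasurable).1 h1
  have hv_mem : ∀ i, MemLp (fun p : Ed d × Ed d => Tbar p.1 - p.2) 2 (γ i) := fun i =>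
    (hTbarf_mem i).sub (hsnd_mem i)
  -- integral transport for the squared term
  have eqB : ∀ i, ∫ p, ‖p.1 - Tbar p.1‖ ^ 2 ∂(γ i) = ∫ x, ‖x - Tbar x‖ ^ 2 ∂μ := by
    intro i
    conv_rhs => rw [← hfst i]
    rw [integral_map measurable_fst.aemeasurable
      (by rw [hfst i]; exact hg_aesm.norm.pow 2)]
  -- cross term
  have eqC : ∀ i, ∫ p, ⟪p.1 - Tbar p.1, Tbar p.1 - p.2⟫ ∂(γ i)
      = (∫ x, ⟪x - Tbar x, Tbar x⟫ ∂μ) - ∫ x, ⟪x - Tbar x, T i x⟫ ∂μ := by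
    intro i
    have hsplit : ∀ p : Ed d × Ed d, ⟪p.1 - Tbar p.1, Tbar p.1 - p.2⟫
        = ⟪p.1 - Tbar p.1, Tbar p.1⟫ - ⟪p.1 - Tbar p.1, p.2⟫ := fun p =>
      inner_sub_right _ _ _
    rw [integral_congr_ae (Filter.Eventually.of_forall hsplit),
      integral_sub (integrable_inner_of_memL2 (hgf_mem i) (hTbarf_mem i))
        (integrable_inner_of_memL2 (hgf_mem i) (hsnd_mem i))]
    have e1 : ∫ p : Ed d × Ed d, ⟪p.1 - Tbar p.1, Tbar p.1⟫ ∂(γ i)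
        = ∫ x, ⟪x - Tbar x, Tbar x⟫ ∂μ := by
      conv_rhs => rw [← hfst i]
      rw [integral_map measurable_fst.aemeasurable
        (by rw [hfst i]; exact hg_aesm.inner hTbar_mem.1)]
    have e2 : ∫ p : Ed d × Ed d, ⟪p.1 - Tbar p.1, p.2⟫ ∂(γ i)
        = ∫ x, ⟪x - Tbar x, T i x⟫ ∂μ := by
      have hInt : Integrable (fun p : Ed d × Ed d => ⟪p.1 - Tbar p.1, p.2⟫) (γ i) :=
        integrable_inner_of_memL2 (hgf_mem i) (hsnd_mem i)
      have h := Measure.integral_condKernel hInt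
      rw [hfstμ i] at h
      rw [← h]
      apply integral_congr_ae
      have hae := (hsnd_int i).condKernel_ae
      rw [hfstμ i] at hae
      filter_upwards [hae] with x hx
      rw [hT i x]
      exact integral_inner hx (x - Tbar x)
    rw [e1, e2]
  -- sum of cross terms is zero
  have hsum0 : ∑ i, α i * ∫ p, ⟪p.1 - Tbar p.1, Tbar p.1 - p.2⟫ ∂(γ i) = 0 := by
    have h1 : ∀ i, α i * ∫ p, ⟪p.1 - Tbar p.1, Tbar p.1 - p.2⟫ ∂(γ i)
        = α i * ∫ x, ⟪x - Tbar x, Tbar x⟫ ∂μ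
          - α i * ∫ x, ⟪x - Tbar x, T i x⟫ ∂μ := fun i => by rw [eqC i]; ring
    rw [Finset.sum_congr rfl (fun i _ => h1 i), Finset.sum_sub_distrib,
      ← Finset.sum_mul, hαsum, one_mul]
    have h2 : ∀ i, α i * ∫ x, ⟪x - Tbar x, T i x⟫ ∂μ
        = ∫ x, α i * ⟪x - Tbar x, T i x⟫ ∂μ := fun i =>
      (integral_const_mul _ _).symm
    rw [Finset.sum_congr rfl (fun i _ => h2 i),
      ← integral_finset_sum _ (fun i _ =>
        (integrable_inner_of_memL2 hg_mem (hT_mem i)).const_mul (α i))]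
    have h3 : ∀ x : Ed d, ∑ i, α i * ⟪x - Tbar x, T i x⟫ = ⟪x - Tbar x, Tbar x⟫ := by
      intro x
      rw [hTbar x, inner_sum]
      exact Finset.sum_congr rfl fun i _ => (real_inner_smul_right _ _ _).symm
    rw [integral_congr_ae (Filter.Eventually.of_forall h3), sub_self]
  -- pointwise expansion
  have hpt : ∀ p : Ed d × Ed d, ‖p.1 - p.2‖ ^ 2
      = ‖p.1 - Tbar p.1‖ ^ 2 + 2 * ⟪p.1 - Tbar p.1, Tbar p.1 - p.2⟫
        + ‖Tbar p.1 - p.2‖ ^ 2 := by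
    intro p
    have h := norm_add_sq_real (p.1 - Tbar p.1) (Tbar p.1 - p.2)
    rw [sub_add_sub_cancel] at h
    linarith
  have eqA : ∀ i, ∫ p, ‖p.1 - p.2‖ ^ 2 ∂(γ i)
      = (∫ x, ‖x - Tbar x‖ ^ 2 ∂μ)
        + 2 * (∫ p, ⟪p.1 - Tbar p.1, Tbar p.1 - p.2⟫ ∂(γ i))
        + ∫ p, ‖Tbar p.1 - p.2‖ ^ 2 ∂(γ i) := by
    intro i
    have Ifg : Integrable (fun p : Ed d × Ed d => ‖p.1 - Tbar p.1‖ ^ 2) (γ i) :=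
      (hgf_mem i).norm.integrable_sq
    have Iv : Integrable (fun p : Ed d × Ed d => ‖Tbar p.1 - p.2‖ ^ 2) (γ i) :=
      (hv_mem i).norm.integrable_sq
    have Iinner : Integrable
        (fun p : Ed d × Ed d => ⟪p.1 - Tbar p.1, Tbar p.1 - p.2⟫) (γ i) :=
      integrable_inner_of_memL2 (hgf_mem i) (hv_mem i)
    have IA : Integrable (fun p : Ed d × Ed d =>
        ‖p.1 - Tbar p.1‖ ^ 2 + 2 * ⟪p.1 - Tbar p.1, Tbar p.1 - p.2⟫) (γ i) :=
      Ifg.add (Iinner.const_mul 2)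
    have IC : Integrable (fun p : Ed d × Ed d =>
        2 * ⟪p.1 - Tbar p.1, Tbar p.1 - p.2⟫) (γ i) := Iinner.const_mul 2
    rw [integral_congr_ae (Filter.Eventually.of_forall hpt),
      integral_add IA Iv, integral_add Ifg IC,
      integral_const_mul, eqB i]
  -- assemble
  have hB : 0 ≤ ∫ x, ‖x - Tbar x‖ ^ 2 ∂μ := integral_nonneg fun x => by positivity
  have main : (∑ i, α i * ∫ p, ‖p.1 - p.2‖ ^ 2 ∂(γ i))
      = (∫ x, ‖x - Tbar x‖ ^ 2 ∂μ)
        + ∑ i, α i * ∫ p, ‖Tbar p.1 - p.2‖ ^ 2 ∂(γ i) := by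
    have h1 : ∀ i, α i * ∫ p, ‖p.1 - p.2‖ ^ 2 ∂(γ i)
        = α i * (∫ x, ‖x - Tbar x‖ ^ 2 ∂μ)
          + 2 * (α i * ∫ p, ⟪p.1 - Tbar p.1, Tbar p.1 - p.2⟫ ∂(γ i))
          + α i * ∫ p, ‖Tbar p.1 - p.2‖ ^ 2 ∂(γ i) := fun i => by rw [eqA i]; ring
    rw [Finset.sum_congr rfl (fun i _ => h1 i), Finset.sum_add_distrib,
      Finset.sum_add_distrib, ← Finset.sum_mul, hαsum, one_mul,
      ← Finset.mul_sum, hsum0, mul_zero, add_zero]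
  exact ⟨main, by linarith⟩


end
end

section
/- Let d ≥ 1 and let μ, ν₁, …, ν_N be Borel probability measures on ℝ^d with finite second moments, α₁, …, α_N ≥ 0 with Σᵢ αᵢ = 1, and τ > 0. For each i, let γᵢ be a coupling attaining the infimum defining W²_{2,ub}(μ, νᵢ), with disintegration γᵢ = μ ⊗ γ_{i,x}, conditional means Tᵢ(x) = ∫ y dγ_{i,x}(y), and T̄(x) = Σᵢ αᵢ Tᵢ(x). If, with V(ρ) = Σᵢ αᵢ W²_{2,ub}(ρ, νᵢ), one has V(μ) ≤ V(T̄_#μ) (in particular, if μ minimizes V over Borel probability measures on ℝ^d with finite second moments), then T̄(x) = x for μ-almost every x, and hence T̄_#μ = μ, i.e., μ is a fixed point of the average map. -/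
open MeasureTheory ENNReal
open scoped RealInnerProductSpace

noncomputable section

/-- Integrability of the identity from integrability of the squared norm. -/
lemma int_id {d : ℕ} (m : Measure (Ed d)) [IsProbabilityMeasure m]
    (h2 : Integrable (fun y => ‖y‖ ^ 2) m) : Integrable (fun y : Ed d => y) m := by
  refine Integrable.mono' ((integrable_const (1 : ℝ)).add h2) ?_ ?_
  · exact aestronglyMeasurable_id
  · refine Filter.Eventually.of_forall fun y => ?_
    have h := norm_nonneg y
    simp only [Pi.add_apply]
    nlinarith [sq_nonneg (‖y‖ - 1)]

/-- Integrability of shifted squared norms. -/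
lemma int_shift {d : ℕ} (m : Measure (Ed d)) [IsProbabilityMeasure m]
    (h2 : Integrable (fun y => ‖y‖ ^ 2) m) (z : Ed d) :
    Integrable (fun y => ‖z - y‖ ^ 2 / 2) m := by
  refine Integrable.mono' ((integrable_const (‖z‖ ^ 2)).add h2)
    (((((continuous_const.sub continuous_id).norm.pow 2).div_const 2)).aestronglyMeasurable) ?_
  refine Filter.Eventually.of_forall fun y => ?_
  have h1 := norm_sub_le z y
  have h2' := norm_nonneg z
  have h3 := norm_nonneg y
  have h4 := norm_nonneg (z - y)
  rw [Real.norm_of_nonneg (by positivity)]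
  simp only [Pi.add_apply]
  nlinarith [sq_nonneg (‖z‖ - ‖y‖)]

/-- Bias-variance expansion. -/
lemma bias_var {d : ℕ} (m : Measure (Ed d)) [IsProbabilityMeasure m]
    (h2 : Integrable (fun y => ‖y‖ ^ 2) m) (z : Ed d) :
    ∫ y, ‖z - y‖ ^ 2 / 2 ∂m
      = (‖z‖ ^ 2 - 2 * ⟪z, ∫ y, y ∂m⟫ + ∫ y, ‖y‖ ^ 2 ∂m) / 2 := by
  have hid : Integrable (fun y : Ed d => y) m := int_id m h2
  have hinner : Integrable (fun y => ⟪z, y⟫) m := hid.const_inner z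
  have h1 : ∫ y, ‖z - y‖ ^ 2 ∂m = ‖z‖ ^ 2 - 2 * ⟪z, ∫ y, y ∂m⟫ + ∫ y, ‖y‖ ^ 2 ∂m := by
    have : (fun y => ‖z - y‖ ^ 2) = fun y => ‖z‖ ^ 2 - 2 * ⟪z, y⟫ + ‖y‖ ^ 2 :=
      funext fun y => norm_sub_sq_real z y
    have e1 : ∫ y, (‖z‖ ^ 2 - 2 * ⟪z, y⟫ + ‖y‖ ^ 2) ∂m
        = (∫ y, (‖z‖ ^ 2 - 2 * ⟪z, y⟫) ∂m) + ∫ y, ‖y‖ ^ 2 ∂m :=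
      integral_add ((integrable_const _).sub (hinner.const_mul 2)) h2
    have e2 : ∫ y, (‖z‖ ^ 2 - 2 * ⟪z, y⟫) ∂m
        = (∫ _, (‖z‖ ^ 2 : ℝ) ∂m) - ∫ y, 2 * ⟪z, y⟫ ∂m :=
      integral_sub (integrable_const _) (hinner.const_mul 2)
    rw [this, e1, e2, integral_const, integral_const_mul, integral_inner hid]
    simp
  rw [integral_div, h1]

/-- Key algebraic identity on conditional means. -/
lemma key_id {d N : ℕ} (α : Fin N → ℝ) (hα : ∀ i, 0 ≤ α i) (hαsum : ∑ i, α i = 1)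
    (m : Fin N → Measure (Ed d)) [∀ i, IsProbabilityMeasure (m i)]
    (h2 : ∀ i, Integrable (fun y => ‖y‖ ^ 2) (m i)) (x Tb : Ed d)
    (hTb : Tb = ∑ i, α i • ∫ y, y ∂(m i)) :
    (∑ i, α i * ∫ y, ‖Tb - y‖ ^ 2 / 2 ∂(m i)) + ‖x - Tb‖ ^ 2 / 2
      = ∑ i, α i * ∫ y, ‖x - y‖ ^ 2 / 2 ∂(m i) := by
  have hb : ∀ z : Ed d, ∑ i, α i * ∫ y, ‖z - y‖ ^ 2 / 2 ∂(m i)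
      = (‖z‖ ^ 2 - 2 * ⟪z, Tb⟫ + ∑ i, α i * ∫ y, ‖y‖ ^ 2 ∂(m i)) / 2 := by
    intro z
    have hin : ∑ i, α i * (2 * ⟪z, ∫ y, y ∂(m i)⟫) = 2 * ⟪z, Tb⟫ := by
      rw [hTb, inner_sum, Finset.mul_sum]
      exact Finset.sum_congr rfl fun i _ => by rw [real_inner_smul_right]; ring
    calc ∑ i, α i * ∫ y, ‖z - y‖ ^ 2 / 2 ∂(m i)
        = ∑ i, α i * ((‖z‖ ^ 2 - 2 * ⟪z, ∫ y, y ∂(m i)⟫ + ∫ y, ‖y‖ ^ 2 ∂(m i)) / 2) :=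
          Finset.sum_congr rfl fun i _ => by rw [bias_var (m i) (h2 i) z]
      _ = (∑ i, (α i * ‖z‖ ^ 2 - α i * (2 * ⟪z, ∫ y, y ∂(m i)⟫) + α i * ∫ y, ‖y‖ ^ 2 ∂(m i))) / 2 := by
          rw [Finset.sum_div]; exact Finset.sum_congr rfl fun i _ => by ring
      _ = ((∑ i, α i * ‖z‖ ^ 2) - (∑ i, α i * (2 * ⟪z, ∫ y, y ∂(m i)⟫))
            + ∑ i, α i * ∫ y, ‖y‖ ^ 2 ∂(m i)) / 2 := by
          rw [Finset.sum_add_distrib, Finset.sum_sub_distrib]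
      _ = (‖z‖ ^ 2 - 2 * ⟪z, Tb⟫ + ∑ i, α i * ∫ y, ‖y‖ ^ 2 ∂(m i)) / 2 := by
          rw [← Finset.sum_mul, hαsum, one_mul, hin]
  rw [hb Tb, hb x, real_inner_self_eq_norm_sq, norm_sub_sq_real x Tb]
  ring

open ProbabilityTheory

set_option maxHeartbeats 2000000

theorem minimizer_is_fixed_point_of_averageMap
    {d N : ℕ} (hd : 1 ≤ d) (τ : ℝ) (hτ : 0 < τ)
    (μ : Measure (Ed d)) [IsProbabilityMeasure μ]
    (hμ : Integrable (fun x => ‖x‖ ^ 2) μ)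
    (ν : Fin N → Measure (Ed d)) [∀ i, IsProbabilityMeasure (ν i)]
    (hν : ∀ i, Integrable (fun x => ‖x‖ ^ 2) (ν i))
    (α : Fin N → ℝ) (hα : ∀ i, 0 ≤ α i) (hαsum : ∑ i, α i = 1)
    (γ : Fin N → Measure (Ed d × Ed d)) [∀ i, IsFiniteMeasure (γ i)]
    (hγ : ∀ i, IsOptimalCoupling τ μ (ν i) (γ i))
    (T : Fin N → Ed d → Ed d)
    (hT : ∀ i x, T i x = ∫ y, y ∂((γ i).condKernel x))
    (Tbar : Ed d → Ed d)
    (hTbar : ∀ x, Tbar x = ∑ i, α i • T i x)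
    (hV : Vfun τ α ν μ ≤ Vfun τ α ν (μ.map Tbar)) :
    (∀ᵐ x ∂μ, Tbar x = x) ∧ μ.map Tbar = μ := by
  classical
  -- basic measurability
  have hcost : Measurable fun p : Ed d × Ed d => ENNReal.ofReal (‖p.1 - p.2‖ ^ 2 / 2) :=
    (((measurable_fst.sub measurable_snd).norm.pow_const 2).div_const 2).ennreal_ofReal
  have hTmeas : ∀ i, Measurable (T i) := by
    intro i
    have h : T i = fun x => ∫ y, y ∂((γ i).condKernel x) := funext (hT i)
    rw [h]
    exact (MeasureTheory.StronglyMeasurable.integral_kernel_prod_right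
      (f := fun _ y => y)
      (measurable_snd.stronglyMeasurable : StronglyMeasurable
        (Prod.snd : Ed d × Ed d → Ed d))).measurable
  have hTbarM : Measurable Tbar := by
    have h : Tbar = fun x => ∑ i, α i • T i x := funext hTbar
    rw [h]
    exact Finset.univ.measurable_sum fun i _ => (hTmeas i).const_smul (α i)
  have hm : Measurable (fun p : Ed d × Ed d => (Tbar p.1, p.2)) :=
    (hTbarM.comp measurable_fst).prodMk measurable_snd
  have hcostT : Measurable fun p : Ed d × Ed d => ENNReal.ofReal (‖Tbar p.1 - p.2‖ ^ 2 / 2) :=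
    ((((hTbarM.comp measurable_fst).sub measurable_snd).norm.pow_const 2).div_const 2).ennreal_ofReal
  have hE_meas : Measurable fun x : Ed d => ENNReal.ofReal (‖x - Tbar x‖ ^ 2 / 2) :=
    (((measurable_id.sub hTbarM).norm.pow_const 2).div_const 2).ennreal_ofReal
  -- marginals and probability
  have hfst : ∀ i, (γ i).map Prod.fst = μ := fun i => (hγ i).1
  have hdis : ∀ i, μ.compProd (γ i).condKernel = γ i := by
    intro i
    have h := (γ i).disintegrate (γ i).condKernel
    rwa [show (γ i).fst = μ from hfst i] at h
  -- finiteness of the optimal cost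
  have hfin : ∀ i, UOTcost τ μ (ν i) < ⊤ := by
    intro i
    have hmarg : (μ.prod (ν i)).map Prod.fst = μ := Measure.fst_prod
    have hD : Dpsi ((μ.prod (ν i)).map Prod.snd) (ν i) = 0 := by
      have hsnd : (μ.prod (ν i)).map Prod.snd = ν i := Measure.snd_prod
      rw [hsnd, Dpsi, if_pos Measure.AbsolutelyContinuous.rfl]
      have h0 : ∀ᵐ y ∂(ν i),
          ENNReal.ofReal (entropyPsi (((ν i).rnDeriv (ν i)) y).toReal) = 0 := by
        filter_upwards [Measure.rnDeriv_self (ν i)] with y hy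
        rw [hy]
        simp [entropyPsi]
      rw [lintegral_congr_ae h0, lintegral_zero]
    have hle : UOTcost τ μ (ν i)
        ≤ (∫⁻ p, ENNReal.ofReal (‖p.1 - p.2‖ ^ 2 / 2) ∂(μ.prod (ν i)))
          + ENNReal.ofReal τ * Dpsi ((μ.prod (ν i)).map Prod.snd) (ν i) := by
      unfold UOTcost
      exact iInf_le_of_le (μ.prod (ν i)) (iInf_le_of_le hmarg le_rfl)
    rw [hD, mul_zero, add_zero] at hle
    have hptw : ∀ p : Ed d × Ed d, ENNReal.ofReal (‖p.1 - p.2‖ ^ 2 / 2)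
        ≤ ENNReal.ofReal (‖p.1‖ ^ 2) + ENNReal.ofReal (‖p.2‖ ^ 2) := by
      intro p
      rw [← ENNReal.ofReal_add (by positivity) (by positivity)]
      apply ENNReal.ofReal_le_ofReal
      nlinarith [norm_sub_le p.1 p.2, norm_nonneg p.1, norm_nonneg p.2,
        sq_nonneg (‖p.1‖ - ‖p.2‖), norm_nonneg (p.1 - p.2)]
    have h1 : ∫⁻ p : Ed d × Ed d, ENNReal.ofReal (‖p.1‖ ^ 2) ∂(μ.prod (ν i))
        = ∫⁻ x, ENNReal.ofReal (‖x‖ ^ 2) ∂μ := by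
      have h := lintegral_map (μ := μ.prod (ν i)) (g := Prod.fst)
        (f := fun x : Ed d => ENNReal.ofReal (‖x‖ ^ 2))
        (measurable_norm.pow_const 2).ennreal_ofReal measurable_fst
      rw [hmarg] at h
      exact h.symm
    have h2 : ∫⁻ p : Ed d × Ed d, ENNReal.ofReal (‖p.2‖ ^ 2) ∂(μ.prod (ν i))
        = ∫⁻ x, ENNReal.ofReal (‖x‖ ^ 2) ∂(ν i) := by
      have hsnd : (μ.prod (ν i)).map Prod.snd = ν i := Measure.snd_prod
      have h := lintegral_map (μ := μ.prod (ν i)) (g := Prod.snd)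
        (f := fun x : Ed d => ENNReal.ofReal (‖x‖ ^ 2))
        (measurable_norm.pow_const 2).ennreal_ofReal measurable_snd
      rw [hsnd] at h
      exact h.symm
    have hsum : ∫⁻ p : Ed d × Ed d, (ENNReal.ofReal (‖p.1‖ ^ 2) + ENNReal.ofReal (‖p.2‖ ^ 2))
        ∂(μ.prod (ν i)) < ⊤ := by
      rw [lintegral_add_left ((measurable_fst.norm.pow_const 2).ennreal_ofReal), h1, h2]
      exact ENNReal.add_lt_top.mpr ⟨hμ.lintegral_lt_top, (hν i).lintegral_lt_top⟩
    exact lt_of_le_of_lt hle (lt_of_le_of_lt (lintegral_mono hptw) hsum)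
  -- the optimal coupling has finite parts
  have hCfin : ∀ i, (∫⁻ p, ENNReal.ofReal (‖p.1 - p.2‖ ^ 2 / 2) ∂(γ i)) ≠ ⊤ := by
    intro i
    exact ne_top_of_le_ne_top (hfin i).ne ((hγ i).2 ▸ le_self_add)
  have hDfin : ∀ i, ENNReal.ofReal τ * Dpsi ((γ i).map Prod.snd) (ν i) ≠ ⊤ := by
    intro i
    exact ne_top_of_le_ne_top (hfin i).ne ((hγ i).2 ▸ le_add_self)
  -- disintegration of the cost integrals
  have hCC : ∀ i, (∫⁻ p, ENNReal.ofReal (‖p.1 - p.2‖ ^ 2 / 2) ∂(γ i))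
      = ∫⁻ x, ∫⁻ y, ENNReal.ofReal (‖x - y‖ ^ 2 / 2) ∂((γ i).condKernel x) ∂μ := by
    intro i
    conv_lhs => rw [← hdis i]
    exact Measure.lintegral_compProd hcost
  have hCC' : ∀ i, (∫⁻ p, ENNReal.ofReal (‖Tbar p.1 - p.2‖ ^ 2 / 2) ∂(γ i))
      = ∫⁻ x, ∫⁻ y, ENNReal.ofReal (‖Tbar x - y‖ ^ 2 / 2) ∂((γ i).condKernel x) ∂μ := by
    intro i
    conv_lhs => rw [← hdis i]
    exact Measure.lintegral_compProd hcostT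
  have hinmeas : ∀ i, Measurable fun x =>
      ∫⁻ y, ENNReal.ofReal (‖x - y‖ ^ 2 / 2) ∂((γ i).condKernel x) := fun i =>
    Measurable.lintegral_kernel_prod_right
      (f := fun x y => ENNReal.ofReal (‖x - y‖ ^ 2 / 2)) hcost
  have hinmeas' : ∀ i, Measurable fun x =>
      ∫⁻ y, ENNReal.ofReal (‖Tbar x - y‖ ^ 2 / 2) ∂((γ i).condKernel x) := fun i =>
    Measurable.lintegral_kernel_prod_right
      (f := fun x y => ENNReal.ofReal (‖Tbar x - y‖ ^ 2 / 2)) hcostT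
  have hae1 : ∀ i, ∀ᵐ x ∂μ,
      (∫⁻ y, ENNReal.ofReal (‖x - y‖ ^ 2 / 2) ∂((γ i).condKernel x)) < ⊤ := fun i =>
    ae_lt_top (hinmeas i) (by rw [← hCC i]; exact hCfin i)
  -- a.e. integrability of squared norms under the conditional kernels
  have haeInt : ∀ᵐ x ∂μ, ∀ i, Integrable (fun y => ‖y‖ ^ 2) ((γ i).condKernel x) := by
    rw [ae_all_iff]
    intro i
    filter_upwards [hae1 i] with x hx
    have hint : Integrable (fun y => ‖x - y‖ ^ 2 / 2) ((γ i).condKernel x) := by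
      refine ⟨(((continuous_const.sub continuous_id).norm.pow 2).div_const 2).aestronglyMeasurable, ?_⟩
      rw [hasFiniteIntegral_iff_ofReal (Filter.Eventually.of_forall fun y => by positivity)]
      exact hx
    refine Integrable.mono' ((hint.const_mul 4).add (integrable_const (2 * ‖x‖ ^ 2)))
      ((continuous_norm.pow 2).aestronglyMeasurable) ?_
    refine Filter.Eventually.of_forall fun y => ?_
    have h3 : ‖y‖ ≤ ‖x‖ + ‖x - y‖ := by
      have h := norm_sub_le x (x - y)
      simpa using h
    rw [Real.norm_of_nonneg (by positivity)]
    simp only [Pi.add_apply]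
    nlinarith [norm_nonneg (x - y), norm_nonneg x, norm_nonneg y,
      sq_nonneg (‖x‖ - ‖x - y‖)]
  -- the key a.e. identity
  have haekey : ∀ᵐ x ∂μ,
      (∑ i, ENNReal.ofReal (α i)
          * ∫⁻ y, ENNReal.ofReal (‖Tbar x - y‖ ^ 2 / 2) ∂((γ i).condKernel x))
        + ENNReal.ofReal (‖x - Tbar x‖ ^ 2 / 2)
      = ∑ i, ENNReal.ofReal (α i)
          * ∫⁻ y, ENNReal.ofReal (‖x - y‖ ^ 2 / 2) ∂((γ i).condKernel x) := by
    filter_upwards [haeInt] with x hx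
    have e1 : ∀ i, (∫⁻ y, ENNReal.ofReal (‖x - y‖ ^ 2 / 2) ∂((γ i).condKernel x))
        = ENNReal.ofReal (∫ y, ‖x - y‖ ^ 2 / 2 ∂((γ i).condKernel x)) := fun i =>
      (ofReal_integral_eq_lintegral_ofReal (int_shift _ (hx i) x)
        (Filter.Eventually.of_forall fun y => by positivity)).symm
    have e2 : ∀ i, (∫⁻ y, ENNReal.ofReal (‖Tbar x - y‖ ^ 2 / 2) ∂((γ i).condKernel x))
        = ENNReal.ofReal (∫ y, ‖Tbar x - y‖ ^ 2 / 2 ∂((γ i).condKernel x)) := fun i =>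
      (ofReal_integral_eq_lintegral_ofReal (int_shift _ (hx i) (Tbar x))
        (Filter.Eventually.of_forall fun y => by positivity)).symm
    have conv : ∀ (h : Fin N → ℝ), (∀ i, 0 ≤ h i) →
        (∑ i, ENNReal.ofReal (α i) * ENNReal.ofReal (h i))
          = ENNReal.ofReal (∑ i, α i * h i) := by
      intro h hh
      rw [ENNReal.ofReal_sum_of_nonneg (fun i _ => mul_nonneg (hα i) (hh i))]
      exact (Finset.sum_congr rfl fun i _ => (ENNReal.ofReal_mul (hα i))).symm
    have hTb : Tbar x = ∑ i, α i • ∫ y, y ∂((γ i).condKernel x) := by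
      rw [hTbar x]
      exact Finset.sum_congr rfl fun i _ => by rw [hT i x]
    have hGnn : ∀ i, (0:ℝ) ≤ ∫ y, ‖Tbar x - y‖ ^ 2 / 2 ∂((γ i).condKernel x) := fun i =>
      integral_nonneg fun y => by positivity
    have hFnn : ∀ i, (0:ℝ) ≤ ∫ y, ‖x - y‖ ^ 2 / 2 ∂((γ i).condKernel x) := fun i =>
      integral_nonneg fun y => by positivity
    have hsum2 : (∑ i, ENNReal.ofReal (α i)
        * ∫⁻ y, ENNReal.ofReal (‖Tbar x - y‖ ^ 2 / 2) ∂((γ i).condKernel x))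
        = ENNReal.ofReal (∑ i, α i * ∫ y, ‖Tbar x - y‖ ^ 2 / 2 ∂((γ i).condKernel x)) := by
      rw [← conv _ hGnn]
      exact Finset.sum_congr rfl fun i _ => by rw [e2 i]
    have hsum1 : (∑ i, ENNReal.ofReal (α i)
        * ∫⁻ y, ENNReal.ofReal (‖x - y‖ ^ 2 / 2) ∂((γ i).condKernel x))
        = ENNReal.ofReal (∑ i, α i * ∫ y, ‖x - y‖ ^ 2 / 2 ∂((γ i).condKernel x)) := by
      rw [← conv _ hFnn]
      exact Finset.sum_congr rfl fun i _ => by rw [e1 i]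
    rw [hsum2, hsum1,
      ← ENNReal.ofReal_add (Finset.sum_nonneg fun i _ => mul_nonneg (hα i) (hGnn i))
        (by positivity)]
    exact congrArg ENNReal.ofReal (key_id α hα hαsum _ hx x (Tbar x) hTb)
  -- assemble the lintegral comparison
  have hLC : (∑ i, ENNReal.ofReal (α i) * ∫⁻ p, ENNReal.ofReal (‖p.1 - p.2‖ ^ 2 / 2) ∂(γ i))
      = ∫⁻ x, ∑ i, ENNReal.ofReal (α i)
          * ∫⁻ y, ENNReal.ofReal (‖x - y‖ ^ 2 / 2) ∂((γ i).condKernel x) ∂μ := by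
    rw [lintegral_finset_sum' _ fun i _ => ((hinmeas i).const_mul _).aemeasurable]
    refine Finset.sum_congr rfl fun i _ => ?_
    rw [hCC i, lintegral_const_mul' _ _ ENNReal.ofReal_ne_top]
  have hLC' : (∑ i, ENNReal.ofReal (α i) * ∫⁻ p, ENNReal.ofReal (‖Tbar p.1 - p.2‖ ^ 2 / 2) ∂(γ i))
      = ∫⁻ x, ∑ i, ENNReal.ofReal (α i)
          * ∫⁻ y, ENNReal.ofReal (‖Tbar x - y‖ ^ 2 / 2) ∂((γ i).condKernel x) ∂μ := by
    rw [lintegral_finset_sum' _ fun i _ => ((hinmeas' i).const_mul _).aemeasurable]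
    refine Finset.sum_congr rfl fun i _ => ?_
    rw [hCC' i, lintegral_const_mul' _ _ ENNReal.ofReal_ne_top]
  have hVμ : Vfun τ α ν μ
      = (∫⁻ x, ∑ i, ENNReal.ofReal (α i)
          * ∫⁻ y, ENNReal.ofReal (‖x - y‖ ^ 2 / 2) ∂((γ i).condKernel x) ∂μ)
        + ∑ i, ENNReal.ofReal (α i)
          * (ENNReal.ofReal τ * Dpsi ((γ i).map Prod.snd) (ν i)) := by
    unfold Vfun
    rw [← hLC, ← Finset.sum_add_distrib]
    refine Finset.sum_congr rfl fun i _ => ?_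
    rw [← mul_add, (hγ i).2]
  -- upper bound for the pushed-forward measure
  have hub : ∀ i, UOTcost τ (μ.map Tbar) (ν i)
      ≤ (∫⁻ p, ENNReal.ofReal (‖Tbar p.1 - p.2‖ ^ 2 / 2) ∂(γ i))
        + ENNReal.ofReal τ * Dpsi ((γ i).map Prod.snd) (ν i) := by
    intro i
    have h1 : ((γ i).map fun p : Ed d × Ed d => (Tbar p.1, p.2)).map Prod.fst = μ.map Tbar := by
      rw [Measure.map_map measurable_fst hm]
      rw [show (Prod.fst ∘ fun p : Ed d × Ed d => (Tbar p.1, p.2)) = Tbar ∘ Prod.fst from rfl]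
      rw [← Measure.map_map hTbarM measurable_fst, hfst i]
    have h2 : ((γ i).map fun p : Ed d × Ed d => (Tbar p.1, p.2)).map Prod.snd
        = (γ i).map Prod.snd := by
      rw [Measure.map_map measurable_snd hm]
      rfl
    have hle : UOTcost τ (μ.map Tbar) (ν i)
        ≤ (∫⁻ p, ENNReal.ofReal (‖p.1 - p.2‖ ^ 2 / 2)
            ∂((γ i).map fun p : Ed d × Ed d => (Tbar p.1, p.2)))
          + ENNReal.ofReal τ
            * Dpsi (((γ i).map fun p : Ed d × Ed d => (Tbar p.1, p.2)).map Prod.snd) (ν i) := by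
      unfold UOTcost
      exact iInf_le_of_le ((γ i).map fun p : Ed d × Ed d => (Tbar p.1, p.2))
        (iInf_le_of_le h1 le_rfl)
    rwa [h2, lintegral_map hcost hm] at hle
  have hVT : Vfun τ α ν (μ.map Tbar)
      ≤ (∫⁻ x, ∑ i, ENNReal.ofReal (α i)
          * ∫⁻ y, ENNReal.ofReal (‖Tbar x - y‖ ^ 2 / 2) ∂((γ i).condKernel x) ∂μ)
        + ∑ i, ENNReal.ofReal (α i)
          * (ENNReal.ofReal τ * Dpsi ((γ i).map Prod.snd) (ν i)) := by
    unfold Vfun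
    rw [← hLC', ← Finset.sum_add_distrib]
    refine Finset.sum_le_sum fun i _ => ?_
    rw [← mul_add]
    exact mul_le_mul_right (hub i) _
  -- notation for the three lintegrals
  set L := ∫⁻ x, ∑ i, ENNReal.ofReal (α i)
      * ∫⁻ y, ENNReal.ofReal (‖x - y‖ ^ 2 / 2) ∂((γ i).condKernel x) ∂μ with hLdef
  set L' := ∫⁻ x, ∑ i, ENNReal.ofReal (α i)
      * ∫⁻ y, ENNReal.ofReal (‖Tbar x - y‖ ^ 2 / 2) ∂((γ i).condKernel x) ∂μ with hL'def
  set E := ∫⁻ x, ENNReal.ofReal (‖x - Tbar x‖ ^ 2 / 2) ∂μ with hEdef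
  set DD := ∑ i, ENNReal.ofReal (α i)
      * (ENNReal.ofReal τ * Dpsi ((γ i).map Prod.snd) (ν i)) with hDDdef
  have hDDne : DD ≠ ⊤ := by
    rw [hDDdef]
    exact (ENNReal.sum_lt_top.mpr fun i _ =>
      ENNReal.mul_lt_top ENNReal.ofReal_lt_top (lt_top_iff_ne_top.mpr (hDfin i))).ne
  have hVfinμ : Vfun τ α ν μ < ⊤ := by
    unfold Vfun
    exact ENNReal.sum_lt_top.mpr fun i _ =>
      ENNReal.mul_lt_top ENNReal.ofReal_lt_top (hfin i)
  have hLne : L ≠ ⊤ := by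
    have h : L ≤ Vfun τ α ν μ := by rw [hVμ]; exact le_self_add
    exact ne_top_of_le_ne_top hVfinμ.ne h
  have hLsplit : L = L' + E := by
    have h : L = ∫⁻ x, ((∑ i, ENNReal.ofReal (α i)
        * ∫⁻ y, ENNReal.ofReal (‖Tbar x - y‖ ^ 2 / 2) ∂((γ i).condKernel x))
        + ENNReal.ofReal (‖x - Tbar x‖ ^ 2 / 2)) ∂μ :=
      lintegral_congr_ae (haekey.mono fun x h => h.symm)
    rw [h, lintegral_add_right _ hE_meas]
  have hLL' : L ≤ L' := by
    have h1 : L + DD ≤ L' + DD := le_trans (le_trans (le_of_eq hVμ.symm) hV) hVT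
    exact (ENNReal.add_le_add_iff_right hDDne).mp h1
  have hL'ne : L' ≠ ⊤ :=
    ne_top_of_le_ne_top hLne (by rw [hLsplit]; exact le_self_add)
  have hE0 : E = 0 := by
    have h : L' + E ≤ L' := by rw [← hLsplit]; exact hLL'
    exact le_zero_iff.mp ((ENNReal.add_le_add_iff_left hL'ne).mp (by rw [add_zero]; exact h))
  have hae : ∀ᵐ x ∂μ, Tbar x = x := by
    have h := (lintegral_eq_zero_iff hE_meas).mp hE0
    filter_upwards [h] with x hx
    have hx' : ENNReal.ofReal (‖x - Tbar x‖ ^ 2 / 2) = 0 := hx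
    have h2 : ‖x - Tbar x‖ ^ 2 / 2 ≤ 0 := ENNReal.ofReal_eq_zero.mp hx'
    have h3 : ‖x - Tbar x‖ = 0 := by
      nlinarith [norm_nonneg (x - Tbar x), sq_nonneg ‖x - Tbar x‖]
    exact (norm_sub_eq_zero_iff.mp h3).symm
  refine ⟨hae, ?_⟩
  have heq : Tbar =ᵐ[μ] id := hae.mono fun x hx => hx
  rw [Measure.map_congr heq, Measure.map_id]

end
end

section
/- Let d ≥ 1, let μ, ν be Borel probability measures on ℝ^d with finite second moments, and let τ > 0. Let v : ℝ^d → ℝ be bounded and Borel measurable, and define its c-transform v^c(x) = inf over y ∈ ℝ^d of [½‖x − y‖² − v(y)], and ψ*_τ(s) = τ·(e^{s/τ} − 1). Then ∫ v^c(x) dμ(x) − ∫ ψ*_τ(−v(y)) dν(y) ≤ W²_{2,ub}(μ, ν) (weak duality for the semi-dual formulation of unbalanced optimal transport). -/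
set_option maxHeartbeats 1000000


open MeasureTheory ENNReal

noncomputable section

lemma young_psi {τ : ℝ} (hτ : 0 < τ) (s : ℝ) {t : ℝ} (ht : 0 ≤ t) :
    s * t ≤ τ * entropyPsi t + τ * (Real.exp (s / τ) - 1) := by
  rcases eq_or_lt_of_le ht with h0 | h0
  · simp only [← h0, entropyPsi, Real.log_zero]
    have := Real.exp_pos (s / τ)
    nlinarith
  · have h1 := Real.add_one_le_exp (s / τ - Real.log t)
    rw [Real.exp_sub, Real.exp_log h0] at h1
    have h2 := mul_le_mul_of_nonneg_left h1 h0.le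
    rw [mul_div_cancel₀ _ h0.ne'] at h2
    have h3 := mul_le_mul_of_nonneg_left h2 hτ.le
    have hst : τ * (t * (s / τ - Real.log t + 1)) =
        s * t - τ * (t * Real.log t) + τ * t := by
      field_simp
    rw [hst] at h3
    simp only [entropyPsi]
    nlinarith

lemma entropyPsi_nonneg {t : ℝ} (ht : 0 ≤ t) : 0 ≤ entropyPsi t := by
  have := young_psi one_pos 0 ht
  simp at this
  linarith

theorem UOT_semidual_weak_duality
    {d : ℕ} (hd : 1 ≤ d)
    (μ ν : Measure (Ed d)) [IsProbabilityMeasure μ] [IsProbabilityMeasure ν]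
    (hμ : Integrable (fun x => ‖x‖ ^ 2) μ)
    (hν : Integrable (fun x => ‖x‖ ^ 2) ν)
    (τ : ℝ) (hτ : 0 < τ)
    (v : Ed d → ℝ) (hvb : ∃ C : ℝ, ∀ y, |v y| ≤ C) (hvm : Measurable v)
    (vc : Ed d → ℝ)
    (hvc : ∀ x, vc x = ⨅ y : Ed d, (‖x - y‖ ^ 2 / 2 - v y)) :
    ENNReal.ofReal ((∫ x, vc x ∂μ) - ∫ y, τ * (Real.exp (-v y / τ) - 1) ∂ν)
      ≤ UOTcost τ μ ν := by
  classical
  obtain ⟨C₀, hC₀⟩ := hvb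
  set C := max C₀ 0 with hCdef
  have hC : ∀ y, |v y| ≤ C := fun y => (hC₀ y).trans (le_max_left _ _)
  have hC0 : 0 ≤ C := le_max_right _ _
  have hbdd : ∀ x : Ed d, BddBelow (Set.range fun y : Ed d => ‖x - y‖ ^ 2 / 2 - v y) := by
    intro x
    refine ⟨-C, ?_⟩
    rintro r ⟨y, rfl⟩
    have h1 := abs_le.mp (hC y)
    have h2 : (0:ℝ) ≤ ‖x - y‖ ^ 2 / 2 := by positivity
    simp only
    linarith [h1.2]
  have hvc_pt : ∀ x y, vc x ≤ ‖x - y‖ ^ 2 / 2 - v y := fun x y => (hvc x) ▸ ciInf_le (hbdd x) y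
  have hvc_le : ∀ x, vc x ≤ C := by
    intro x
    refine le_trans (hvc_pt x x) ?_
    have := (abs_le.mp (hC x)).1
    simp only [sub_self, norm_zero]
    ring_nf
    linarith
  have hvc_ge : ∀ x, -C ≤ vc x := by
    intro x; rw [hvc]
    refine le_ciInf fun y => ?_
    have h2 : (0:ℝ) ≤ ‖x - y‖ ^ 2 / 2 := by positivity
    linarith [(abs_le.mp (hC y)).2]
  have husc : UpperSemicontinuous vc := by
    intro x₀ r hr
    have hex : ∃ y, ‖x₀ - y‖ ^ 2 / 2 - v y < r := by
      by_contra h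
      push_neg at h
      have : r ≤ vc x₀ := (hvc x₀) ▸ le_ciInf h
      exact absurd hr (not_lt.mpr this)
    obtain ⟨y, hy⟩ := hex
    have hcont : Continuous fun x : Ed d => ‖x - y‖ ^ 2 / 2 - v y := by
      have : Continuous fun x : Ed d => ‖x - y‖ := (continuous_id.sub continuous_const).norm
      continuity
    have hev := (hcont.tendsto x₀).eventually_lt_const hy
    filter_upwards [hev] with x hx
    exact lt_of_le_of_lt (hvc_pt x y) hx
  have hvcm : Measurable vc := husc.measurable
  rw [UOTcost]
  refine le_iInf fun π => le_iInf fun hπ => ?_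
  have hπuniv : π Set.univ = 1 := by
    have h := congrArg (fun m : Measure (Ed d) => m Set.univ) hπ
    simpa [Measure.map_apply measurable_fst MeasurableSet.univ] using h
  haveI hπprob : IsProbabilityMeasure π := ⟨hπuniv⟩
  set ρ := π.map Prod.snd with hρdef
  haveI hρprob : IsProbabilityMeasure ρ := Measure.isProbabilityMeasure_map measurable_snd.aemeasurable
  by_cases hac : ρ ≪ ν
  swap
  · rw [Dpsi, if_neg hac, ENNReal.mul_top (ENNReal.ofReal_pos.mpr hτ).ne']
    simp
  rw [Dpsi, if_pos hac]
  set D : ℝ≥0∞ := ∫⁻ y, ENNReal.ofReal (entropyPsi ((ρ.rnDeriv ν) y).toReal) ∂ν with hD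
  set L : ℝ≥0∞ := ∫⁻ p : Ed d × Ed d, ENNReal.ofReal (‖p.1 - p.2‖ ^ 2 / 2) ∂π with hL
  by_cases hDtop : D = ⊤
  · rw [hDtop, ENNReal.mul_top (ENNReal.ofReal_pos.mpr hτ).ne']
    simp
  by_cases hLtop : L = ⊤
  · rw [hLtop]; simp
  set f : Ed d → ℝ := fun y => ((ρ.rnDeriv ν) y).toReal with hf
  have hfm : Measurable f := (Measure.measurable_rnDeriv ρ ν).ennreal_toReal
  have hfnn : ∀ y, 0 ≤ f y := fun y => ENNReal.toReal_nonneg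
  have hf_int : Integrable f ν := Measure.integrable_toReal_rnDeriv
  have hcostm : Continuous fun p : Ed d × Ed d => ‖p.1 - p.2‖ ^ 2 / 2 := by
    have : Continuous fun p : Ed d × Ed d => ‖p.1 - p.2‖ :=
      (continuous_fst.sub continuous_snd).norm
    continuity
  have hcost_nn : ∀ p : Ed d × Ed d, 0 ≤ ‖p.1 - p.2‖ ^ 2 / 2 := fun p => by positivity
  have hcost_int : Integrable (fun p : Ed d × Ed d => ‖p.1 - p.2‖ ^ 2 / 2) π := by
    refine ⟨hcostm.aestronglyMeasurable, ?_⟩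
    rw [hasFiniteIntegral_iff_ofReal (Filter.Eventually.of_forall hcost_nn)]
    exact lt_of_le_of_ne le_top hLtop
  have hcost_eq : ∫ p, ‖p.1 - p.2‖ ^ 2 / 2 ∂π = L.toReal := by
    rw [hL, integral_eq_lintegral_of_nonneg_ae (Filter.Eventually.of_forall hcost_nn)
      hcostm.aestronglyMeasurable]
  have hψm : Measurable fun y => entropyPsi (f y) := by
    have h : Measurable entropyPsi :=
      ((measurable_id.mul Real.measurable_log).sub measurable_id).add measurable_const
    exact h.comp hfm
  have hψnn : ∀ y, 0 ≤ entropyPsi (f y) := fun y => entropyPsi_nonneg (hfnn y)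
  have hψ_int : Integrable (fun y => entropyPsi (f y)) ν := by
    refine ⟨hψm.aestronglyMeasurable, ?_⟩
    rw [hasFiniteIntegral_iff_ofReal (Filter.Eventually.of_forall hψnn)]
    exact lt_of_le_of_ne le_top hDtop
  have hψ_eq : ∫ y, entropyPsi (f y) ∂ν = D.toReal := by
    rw [hD, integral_eq_lintegral_of_nonneg_ae (Filter.Eventually.of_forall hψnn)
      hψm.aestronglyMeasurable]
  have hv_int_ρ : Integrable v ρ := by
    refine Integrable.mono' (integrable_const C) hvm.aestronglyMeasurable ?_
    filter_upwards with y; rw [Real.norm_eq_abs]; exact hC y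
  have step1 : ∫ x, vc x ∂μ ≤ L.toReal - ∫ y, v y ∂ρ := by
    have h1 : ∫ x, vc x ∂μ = ∫ p : Ed d × Ed d, vc p.1 ∂π := by
      rw [← hπ, integral_map measurable_fst.aemeasurable hvcm.aestronglyMeasurable]
    have h2 : ∫ y, v y ∂ρ = ∫ p : Ed d × Ed d, v p.2 ∂π := by
      rw [hρdef, integral_map measurable_snd.aemeasurable hvm.aestronglyMeasurable]
    have h3 : Integrable (fun p : Ed d × Ed d => v p.2) π := by
      refine Integrable.mono' (integrable_const C)
        (hvm.comp measurable_snd).aestronglyMeasurable ?_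
      filter_upwards with p; rw [Real.norm_eq_abs]; exact hC p.2
    have h4 : Integrable (fun p : Ed d × Ed d => vc p.1) π := by
      refine Integrable.mono' (integrable_const C)
        (hvcm.comp measurable_fst).aestronglyMeasurable ?_
      filter_upwards with p; rw [Real.norm_eq_abs, abs_le]; exact ⟨hvc_ge _, hvc_le _⟩
    have h5 : ∫ p : Ed d × Ed d, vc p.1 ∂π
        ≤ ∫ p : Ed d × Ed d, (‖p.1 - p.2‖ ^ 2 / 2 - v p.2) ∂π :=
      integral_mono h4 (hcost_int.sub h3) (fun p => hvc_pt p.1 p.2)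
    rw [integral_sub hcost_int h3, hcost_eq] at h5
    rw [h1, h2]; exact h5
  have step2 : ∫ y, v y ∂ρ = ∫ y, v y * f y ∂ν := by
    rw [← integral_rnDeriv_smul hac]
    congr 1; ext y; simp [hf, smul_eq_mul]; ring
  have hB_int : Integrable (fun y => τ * (Real.exp (-v y / τ) - 1)) ν := by
    refine Integrable.mono' (integrable_const (τ * (Real.exp (C / τ) + 1))) ?_ ?_
    · exact (((hvm.neg.div_const τ).exp.sub measurable_const).const_mul τ).aestronglyMeasurable
    · filter_upwards with y
      rw [Real.norm_eq_abs, abs_mul, abs_of_pos hτ]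
      refine mul_le_mul_of_nonneg_left ?_ hτ.le
      rw [abs_le]
      constructor
      · have h1 := Real.exp_pos (-v y / τ); have h2 := Real.exp_pos (C / τ); linarith
      · have h1 : -v y / τ ≤ C / τ := by
          gcongr
          · linarith [(abs_le.mp (hC y)).1]
        have := Real.exp_le_exp.mpr h1
        linarith
  have step4 : -∫ y, v y * f y ∂ν
      ≤ τ * D.toReal + ∫ y, τ * (Real.exp (-v y / τ) - 1) ∂ν := by
    have hvf_int : Integrable (fun y => v y * f y) ν := by
      refine hf_int.bdd_mul (c := C) hvm.aestronglyMeasurable (Filter.Eventually.of_forall ?_)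
      intro y; rw [Real.norm_eq_abs]; exact hC y
    have hmono : ∫ y, -(v y * f y) ∂ν
        ≤ ∫ y, (τ * entropyPsi (f y) + τ * (Real.exp (-v y / τ) - 1)) ∂ν := by
      refine integral_mono hvf_int.neg ((hψ_int.const_mul τ).add hB_int) fun y => ?_
      have := young_psi hτ (-v y) (hfnn y)
      simpa [neg_mul] using this
    rw [integral_neg] at hmono
    rw [integral_add (hψ_int.const_mul τ) hB_int, integral_const_mul, hψ_eq] at hmono
    exact hmono
  have hRt : L + ENNReal.ofReal τ * D ≠ ⊤ :=
    ENNReal.add_ne_top.mpr ⟨hLtop, ENNReal.mul_ne_top ENNReal.ofReal_ne_top hDtop⟩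
  rw [ENNReal.ofReal_le_iff_le_toReal hRt, ENNReal.toReal_add hLtop
    (ENNReal.mul_ne_top ENNReal.ofReal_ne_top hDtop), ENNReal.toReal_mul,
    ENNReal.toReal_ofReal hτ.le]
  have := step2 ▸ step1
  linarith [step4, step1, step2]


end
end

section
/- Let d ≥ 1 and let ν₁, …, ν_N be Borel probability measures on ℝ^d with finite second moments, α₁, …, α_N ≥ 0 with Σᵢ αᵢ = 1, and τ > 0, and set V(ρ) = Σᵢ αᵢ W²_{2,ub}(ρ, νᵢ). Suppose (μ_n)_{n ≥ 0} is a sequence of Borel probability measures on ℝ^d with finite second moments such that for every n, there exist couplings γ_{n,i} attaining the infimum defining W²_{2,ub}(μ_n, νᵢ) for each i, and μ_{n+1} = (T̄_n)_#μ_n, where T̄_n(x) = Σᵢ αᵢ ∫ y d(γ_{n,i})_x(y) is the average of the conditional means of the disintegrations γ_{n,i} = μ_n ⊗ (γ_{n,i})_x. Then the sequence n ↦ V(μ_n) is monotone non-increasing. -/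
open MeasureTheory ENNReal

noncomputable section

open scoped RealInnerProductSpace ProbabilityTheory

/-- If `‖y‖²` is integrable, then `y` is integrable. -/
lemma integrable_id_of_sq {d : ℕ} (K : Measure (Ed d)) [IsProbabilityMeasure K]
    (h2 : Integrable (fun y => ‖y‖ ^ 2) K) : Integrable (fun y : Ed d => y) K := by
  refine Integrable.mono' ((integrable_const (1 : ℝ)).add h2) aestronglyMeasurable_id
    (Filter.Eventually.of_forall fun y => ?_)
  show ‖(y : Ed d)‖ ≤ 1 + ‖y‖ ^ 2
  nlinarith [sq_nonneg (‖y‖ - 1), norm_nonneg y]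

lemma integrable_normsq_sub {d : ℕ} (K : Measure (Ed d)) [IsProbabilityMeasure K]
    (h2 : Integrable (fun y => ‖y‖ ^ 2) K) (a : Ed d) :
    Integrable (fun y => ‖a - y‖ ^ 2) K := by
  have h1 : Integrable (fun y : Ed d => y) K := integrable_id_of_sq K h2
  have he : (fun y : Ed d => ‖a - y‖ ^ 2)
      = fun y => ‖a‖ ^ 2 - 2 * ⟪a, y⟫ + ‖y‖ ^ 2 := funext fun y => norm_sub_sq_real a y
  rw [he]
  exact ((integrable_const _).sub ((h1.const_inner a).const_mul 2)).add h2

lemma integral_normsq_sub {d : ℕ} (K : Measure (Ed d)) [IsProbabilityMeasure K]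
    (h2 : Integrable (fun y => ‖y‖ ^ 2) K) (a : Ed d) :
    ∫ y, ‖a - y‖ ^ 2 ∂K
      = ‖a‖ ^ 2 - 2 * ⟪a, ∫ y, y ∂K⟫ + ∫ y, ‖y‖ ^ 2 ∂K := by
  have h1 : Integrable (fun y : Ed d => y) K := integrable_id_of_sq K h2
  have hinner : Integrable (fun y => ⟪a, y⟫) K := h1.const_inner a
  have he : (fun y : Ed d => ‖a - y‖ ^ 2)
      = fun y => ‖a‖ ^ 2 - 2 * ⟪a, y⟫ + ‖y‖ ^ 2 := funext fun y => norm_sub_sq_real a y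
  have e1 : ∫ y, (‖a‖ ^ 2 - 2 * ⟪a, y⟫ + ‖y‖ ^ 2) ∂K
      = (∫ y, (‖a‖ ^ 2 - 2 * ⟪a, y⟫) ∂K) + ∫ y, ‖y‖ ^ 2 ∂K :=
    integral_add ((integrable_const _).sub (hinner.const_mul 2)) h2
  have e2 : ∫ y, (‖a‖ ^ 2 - 2 * ⟪a, y⟫) ∂K
      = (∫ _, (‖a‖ ^ 2 : ℝ) ∂K) - ∫ y, 2 * ⟪a, y⟫ ∂K :=
    integral_sub (integrable_const _) (hinner.const_mul 2)
  have e3 : ∫ y, 2 * ⟪a, y⟫ ∂K = 2 * ∫ y, ⟪a, y⟫ ∂K := integral_const_mul 2 _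
  rw [he, e1, e2, e3, integral_inner h1, integral_const]
  simp [measure_univ]

/-- The barycentric (Jensen) inequality for the quadratic expansions. -/
lemma jensen_step {d N : ℕ} (S : Finset (Fin N)) (α : Fin N → ℝ)
    (m : Fin N → Ed d) (g : Fin N → ℝ) (x T : Ed d)
    (hT : T = ∑ i ∈ S, α i • m i) (hS1 : ∑ i ∈ S, α i = 1) :
    ∑ i ∈ S, α i * ((‖T‖ ^ 2 - 2 * ⟪T, m i⟫ + g i) / 2)
      ≤ ∑ i ∈ S, α i * ((‖x‖ ^ 2 - 2 * ⟪x, m i⟫ + g i) / 2) := by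
  rw [← sub_nonneg, ← Finset.sum_sub_distrib]
  have hcongr : ∀ i ∈ S,
      α i * ((‖x‖ ^ 2 - 2 * ⟪x, m i⟫ + g i) / 2)
        - α i * ((‖T‖ ^ 2 - 2 * ⟪T, m i⟫ + g i) / 2)
      = α i * ((‖x‖ ^ 2 - ‖T‖ ^ 2) / 2) + α i * ⟪T - x, m i⟫ := by
    intro i _
    rw [inner_sub_left]
    ring
  rw [Finset.sum_congr rfl hcongr, Finset.sum_add_distrib, ← Finset.sum_mul, hS1, one_mul]
  have h2 : ∑ i ∈ S, α i * ⟪T - x, m i⟫ = ⟪T - x, T⟫ := by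
    calc ∑ i ∈ S, α i * ⟪T - x, m i⟫ = ⟪T - x, ∑ i ∈ S, α i • m i⟫ := by
          rw [inner_sum]
          exact Finset.sum_congr rfl fun i _ => (real_inner_smul_right _ _ _).symm
      _ = ⟪T - x, T⟫ := by rw [← hT]
  rw [h2]
  have hi : ⟪T - x, T⟫ = ⟪T, T⟫ - ⟪x, T⟫ := inner_sub_left _ _ _
  have h3 : ⟪T, T⟫ = ‖T‖ ^ 2 := real_inner_self_eq_norm_sq T
  have h4 : ‖x - T‖ ^ 2 = ‖x‖ ^ 2 - 2 * ⟪x, T⟫ + ‖T‖ ^ 2 := norm_sub_sq_real x T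
  nlinarith [sq_nonneg ‖x - T‖]

set_option maxHeartbeats 2000000 in
theorem fixed_point_iteration_objective_antitone
    {d N : ℕ} (hd : 1 ≤ d) (τ : ℝ) (hτ : 0 < τ)
    (ν : Fin N → Measure (Ed d)) [∀ i, IsProbabilityMeasure (ν i)]
    (hν : ∀ i, Integrable (fun x => ‖x‖ ^ 2) (ν i))
    (α : Fin N → ℝ) (hα : ∀ i, 0 ≤ α i) (hαsum : ∑ i, α i = 1)
    (μ : ℕ → Measure (Ed d)) [∀ n, IsProbabilityMeasure (μ n)]
    (hμ : ∀ n, Integrable (fun x => ‖x‖ ^ 2) (μ n))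
    (γ : ℕ → Fin N → Measure (Ed d × Ed d)) [∀ n i, IsFiniteMeasure (γ n i)]
    (hγ : ∀ n i, IsOptimalCoupling τ (μ n) (ν i) (γ n i))
    (Tbar : ℕ → Ed d → Ed d)
    (hTbar : ∀ n x, Tbar n x = ∑ i, α i • ∫ y, y ∂((γ n i).condKernel x))
    (hiter : ∀ n, μ (n + 1) = (μ n).map (Tbar n)) :
    Antitone (fun n => Vfun τ α ν (μ n)) := by
  apply antitone_nat_of_succ_le
  intro n
  simp only [Vfun]
  -- measurability facts
  have hTmeas : Measurable (Tbar n) := by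
    have h1 : ∀ i : Fin N, Measurable fun x => ∫ y, y ∂((γ n i).condKernel x) := by
      intro i
      have := MeasureTheory.StronglyMeasurable.integral_kernel_prod_right'
        (κ := (γ n i).condKernel) (f := Prod.snd) measurable_snd.stronglyMeasurable
      exact this.measurable
    have hTe : Tbar n = fun x => ∑ i, α i • ∫ y, y ∂((γ n i).condKernel x) := funext (hTbar n)
    rw [hTe]
    exact Finset.measurable_sum _ fun i _ => (h1 i).const_smul (α i)
  have hc : Measurable fun p : Ed d × Ed d => ENNReal.ofReal (‖p.1 - p.2‖ ^ 2 / 2) := by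
    have hcont : Continuous fun p : Ed d × Ed d => ‖p.1 - p.2‖ ^ 2 / 2 :=
      ((continuous_fst.sub continuous_snd).norm.pow 2).div_const 2
    exact ENNReal.measurable_ofReal.comp hcont.measurable
  have hg : Measurable fun p : Ed d × Ed d => (Tbar n p.1, p.2) :=
    (hTmeas.comp measurable_fst).prodMk measurable_snd
  have hcT : Measurable fun p : Ed d × Ed d =>
      ENNReal.ofReal (‖Tbar n p.1 - p.2‖ ^ 2 / 2) :=
    ENNReal.measurable_ofReal.comp
      ((((hTmeas.comp measurable_fst).sub measurable_snd).norm.pow_const 2).div_const 2)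
  -- marginals / disintegration
  have hfst : ∀ i, (γ n i).map Prod.fst = μ n := fun i => (hγ n i).1
  have hdis : ∀ i, (μ n) ⊗ₘ (γ n i).condKernel = γ n i := by
    intro i
    have h := Measure.disintegrate (γ n i) (γ n i).condKernel
    rwa [show (γ n i).fst = μ n from hfst i] at h
  -- Step 1 : upper bound on the new cost using the pushforward coupling
  have key : ∀ i, UOTcost τ (μ (n + 1)) (ν i)
      ≤ (∫⁻ p, ENNReal.ofReal (‖Tbar n p.1 - p.2‖ ^ 2 / 2) ∂(γ n i))
        + ENNReal.ofReal τ * Dpsi ((γ n i).map Prod.snd) (ν i) := by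
    intro i
    have hπfst : ((γ n i).map (fun p => (Tbar n p.1, p.2))).map Prod.fst = μ (n + 1) := by
      rw [Measure.map_map measurable_fst hg]
      have he : (Prod.fst ∘ fun p : Ed d × Ed d => (Tbar n p.1, p.2)) = Tbar n ∘ Prod.fst := rfl
      rw [he, ← Measure.map_map hTmeas measurable_fst, hfst i, hiter n]
    have hπsnd : ((γ n i).map (fun p => (Tbar n p.1, p.2))).map Prod.snd
        = (γ n i).map Prod.snd := by
      rw [Measure.map_map measurable_snd hg]
      rfl
    have hπint : (∫⁻ p, ENNReal.ofReal (‖p.1 - p.2‖ ^ 2 / 2)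
          ∂((γ n i).map (fun p => (Tbar n p.1, p.2))))
        = ∫⁻ p, ENNReal.ofReal (‖Tbar n p.1 - p.2‖ ^ 2 / 2) ∂(γ n i) := lintegral_map hc hg
    have hle : UOTcost τ (μ (n + 1)) (ν i)
        ≤ (∫⁻ p, ENNReal.ofReal (‖p.1 - p.2‖ ^ 2 / 2)
            ∂((γ n i).map (fun p => (Tbar n p.1, p.2))))
          + ENNReal.ofReal τ
            * Dpsi (((γ n i).map (fun p => (Tbar n p.1, p.2))).map Prod.snd) (ν i) := by
      rw [UOTcost]
      exact iInf_le_of_le ((γ n i).map (fun p => (Tbar n p.1, p.2)))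
        (iInf_le_of_le hπfst le_rfl)
    rwa [hπint, hπsnd] at hle
  have hopt : ∀ i, (∫⁻ p, ENNReal.ofReal (‖p.1 - p.2‖ ^ 2 / 2) ∂(γ n i))
      + ENNReal.ofReal τ * Dpsi ((γ n i).map Prod.snd) (ν i)
      = UOTcost τ (μ n) (ν i) := fun i => (hγ n i).2
  -- Step 2 : core inequality for the transport terms
  have core : ∑ i, ENNReal.ofReal (α i)
        * (∫⁻ p, ENNReal.ofReal (‖Tbar n p.1 - p.2‖ ^ 2 / 2) ∂(γ n i))
      ≤ ∑ i, ENNReal.ofReal (α i)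
        * (∫⁻ p, ENNReal.ofReal (‖p.1 - p.2‖ ^ 2 / 2) ∂(γ n i)) := by
    by_cases htop : ∀ i, ENNReal.ofReal (α i)
        * (∫⁻ p, ENNReal.ofReal (‖p.1 - p.2‖ ^ 2 / 2) ∂(γ n i)) ≠ ⊤
    swap
    · push_neg at htop
      obtain ⟨i, hi⟩ := htop
      have : ∑ i, ENNReal.ofReal (α i)
          * (∫⁻ p, ENNReal.ofReal (‖p.1 - p.2‖ ^ 2 / 2) ∂(γ n i)) = ⊤ :=
        ENNReal.sum_eq_top.mpr ⟨i, Finset.mem_univ i, hi⟩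
      rw [this]; exact le_top
    -- measurable families of conditional costs
    have hFmeas_old : ∀ i, Measurable fun x =>
        ∫⁻ y, ENNReal.ofReal (‖x - y‖ ^ 2 / 2) ∂((γ n i).condKernel x) :=
      fun i => Measurable.lintegral_kernel_prod_right' hc
    have hFmeas_new : ∀ i, Measurable fun x =>
        ∫⁻ y, ENNReal.ofReal (‖Tbar n x - y‖ ^ 2 / 2) ∂((γ n i).condKernel x) :=
      fun i => Measurable.lintegral_kernel_prod_right' hcT
    have hAold : ∀ i, (∫⁻ p, ENNReal.ofReal (‖p.1 - p.2‖ ^ 2 / 2) ∂(γ n i))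
        = ∫⁻ x, ∫⁻ y, ENNReal.ofReal (‖x - y‖ ^ 2 / 2) ∂((γ n i).condKernel x) ∂(μ n) := by
      intro i
      conv_lhs => rw [← hdis i]
      rw [Measure.lintegral_compProd hc]
    have hAnew : ∀ i, (∫⁻ p, ENNReal.ofReal (‖Tbar n p.1 - p.2‖ ^ 2 / 2) ∂(γ n i))
        = ∫⁻ x, ∫⁻ y, ENNReal.ofReal (‖Tbar n x - y‖ ^ 2 / 2)
            ∂((γ n i).condKernel x) ∂(μ n) := by
      intro i
      conv_lhs => rw [← hdis i]
      rw [Measure.lintegral_compProd hcT]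
    have swap : ∀ (F : Fin N → Ed d → ℝ≥0∞), (∀ i, Measurable (F i)) →
        ∑ i, ENNReal.ofReal (α i) * ∫⁻ x, F i x ∂(μ n)
          = ∫⁻ x, ∑ i, ENNReal.ofReal (α i) * F i x ∂(μ n) := by
      intro F hF
      calc ∑ i, ENNReal.ofReal (α i) * ∫⁻ x, F i x ∂(μ n)
          = ∑ i, ∫⁻ x, ENNReal.ofReal (α i) * F i x ∂(μ n) :=
            Finset.sum_congr rfl fun i _ => (lintegral_const_mul _ (hF i)).symm
        _ = ∫⁻ x, ∑ i, ENNReal.ofReal (α i) * F i x ∂(μ n) :=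
            (lintegral_finset_sum _ fun i _ => (hF i).const_mul _).symm
    have e_new : (∑ i, ENNReal.ofReal (α i)
          * (∫⁻ p, ENNReal.ofReal (‖Tbar n p.1 - p.2‖ ^ 2 / 2) ∂(γ n i)))
        = ∫⁻ x, ∑ i, ENNReal.ofReal (α i)
            * ∫⁻ y, ENNReal.ofReal (‖Tbar n x - y‖ ^ 2 / 2) ∂((γ n i).condKernel x) ∂(μ n) :=
      calc (∑ i, ENNReal.ofReal (α i)
            * (∫⁻ p, ENNReal.ofReal (‖Tbar n p.1 - p.2‖ ^ 2 / 2) ∂(γ n i)))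
          = ∑ i, ENNReal.ofReal (α i)
            * ∫⁻ x, (∫⁻ y, ENNReal.ofReal (‖Tbar n x - y‖ ^ 2 / 2)
                ∂((γ n i).condKernel x)) ∂(μ n) :=
            Finset.sum_congr rfl fun i _ => by rw [hAnew i]
        _ = _ := swap _ hFmeas_new
    have e_old : (∑ i, ENNReal.ofReal (α i)
          * (∫⁻ p, ENNReal.ofReal (‖p.1 - p.2‖ ^ 2 / 2) ∂(γ n i)))
        = ∫⁻ x, ∑ i, ENNReal.ofReal (α i)
            * ∫⁻ y, ENNReal.ofReal (‖x - y‖ ^ 2 / 2) ∂((γ n i).condKernel x) ∂(μ n) :=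
      calc (∑ i, ENNReal.ofReal (α i)
            * (∫⁻ p, ENNReal.ofReal (‖p.1 - p.2‖ ^ 2 / 2) ∂(γ n i)))
          = ∑ i, ENNReal.ofReal (α i)
            * ∫⁻ x, (∫⁻ y, ENNReal.ofReal (‖x - y‖ ^ 2 / 2)
                ∂((γ n i).condKernel x)) ∂(μ n) :=
            Finset.sum_congr rfl fun i _ => by rw [hAold i]
        _ = _ := swap _ hFmeas_old
    rw [e_new, e_old]
    -- a.e. finiteness of the conditional old costs
    have hae : ∀ᵐ x ∂(μ n), ∀ i, α i ≠ 0 →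
        (∫⁻ y, ENNReal.ofReal (‖x - y‖ ^ 2 / 2) ∂((γ n i).condKernel x)) < ⊤ := by
      rw [ae_all_iff]
      intro i
      by_cases hαi : α i = 0
      · filter_upwards with x hx; exact absurd hαi hx
      · have hαpos : (0 : ℝ) < α i := lt_of_le_of_ne (hα i) (Ne.symm hαi)
        have hne : (∫⁻ x, ∫⁻ y, ENNReal.ofReal (‖x - y‖ ^ 2 / 2)
            ∂((γ n i).condKernel x) ∂(μ n)) ≠ ⊤ := by
          intro hT'
          apply htop i
          rw [hAold i, hT', ENNReal.mul_top (ENNReal.ofReal_pos.mpr hαpos).ne']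
        filter_upwards [ae_lt_top (hFmeas_old i) hne] with x hx _
        exact hx
    apply lintegral_mono_ae
    filter_upwards [hae] with x hx
    set S : Finset (Fin N) := Finset.univ.filter fun i => α i ≠ 0 with hSdef
    have hzero : ∀ X : Fin N → ℝ≥0∞,
        ∑ i, ENNReal.ofReal (α i) * X i = ∑ i ∈ S, ENNReal.ofReal (α i) * X i := by
      intro X
      symm
      apply Finset.sum_subset (Finset.filter_subset _ _)
      intro i _ hiS
      have hzi : α i = 0 := by
        by_contra h
        exact hiS (Finset.mem_filter.mpr ⟨Finset.mem_univ i, h⟩)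
      simp [hzi]
    rw [hzero, hzero]
    have hmeas_cx : Measurable fun y : Ed d => ENNReal.ofReal (‖x - y‖ ^ 2 / 2) := by
      have hcont : Continuous fun y : Ed d => ‖x - y‖ ^ 2 / 2 :=
        ((continuous_const.sub continuous_id).norm.pow 2).div_const 2
      exact ENNReal.measurable_ofReal.comp hcont.measurable
    -- second moments of the conditional measures are finite
    have hK2 : ∀ i ∈ S, Integrable (fun y => ‖y‖ ^ 2) ((γ n i).condKernel x) := by
      intro i hiS
      have hαi : α i ≠ 0 := (Finset.mem_filter.mp hiS).2
      have hFi := hx i hαi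
      have hbound : (∫⁻ y, ENNReal.ofReal (‖y‖ ^ 2) ∂((γ n i).condKernel x)) < ⊤ := by
        have hmono : ∀ y : Ed d, ENNReal.ofReal (‖y‖ ^ 2)
            ≤ ENNReal.ofReal 4 * ENNReal.ofReal (‖x - y‖ ^ 2 / 2)
              + ENNReal.ofReal (2 * ‖x‖ ^ 2) := by
          intro y
          have hy : ‖y‖ ≤ ‖x‖ + ‖x - y‖ := by
            calc ‖y‖ = ‖x - (x - y)‖ := by rw [_root_.sub_sub_cancel]
              _ ≤ ‖x‖ + ‖x - y‖ := norm_sub_le _ _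
          have h1 : ‖y‖ ^ 2 ≤ 4 * (‖x - y‖ ^ 2 / 2) + 2 * ‖x‖ ^ 2 := by
            have hy2 := pow_le_pow_left₀ (norm_nonneg y) hy 2
            nlinarith [hy2, sq_nonneg (‖x‖ - ‖x - y‖)]
          calc ENNReal.ofReal (‖y‖ ^ 2)
              ≤ ENNReal.ofReal (4 * (‖x - y‖ ^ 2 / 2) + 2 * ‖x‖ ^ 2) :=
                ENNReal.ofReal_le_ofReal h1
            _ = ENNReal.ofReal (4 * (‖x - y‖ ^ 2 / 2)) + ENNReal.ofReal (2 * ‖x‖ ^ 2) :=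
                ENNReal.ofReal_add (by positivity) (by positivity)
            _ = ENNReal.ofReal 4 * ENNReal.ofReal (‖x - y‖ ^ 2 / 2)
                + ENNReal.ofReal (2 * ‖x‖ ^ 2) := by
                rw [ENNReal.ofReal_mul (by norm_num)]
        calc (∫⁻ y, ENNReal.ofReal (‖y‖ ^ 2) ∂((γ n i).condKernel x))
            ≤ ∫⁻ y, (ENNReal.ofReal 4 * ENNReal.ofReal (‖x - y‖ ^ 2 / 2)
                + ENNReal.ofReal (2 * ‖x‖ ^ 2)) ∂((γ n i).condKernel x) :=
              lintegral_mono hmono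
          _ = ENNReal.ofReal 4
                * (∫⁻ y, ENNReal.ofReal (‖x - y‖ ^ 2 / 2) ∂((γ n i).condKernel x))
              + ENNReal.ofReal (2 * ‖x‖ ^ 2) := by
              rw [lintegral_add_right _ measurable_const, lintegral_const_mul _ hmeas_cx,
                lintegral_const]
              simp [measure_univ]
          _ < ⊤ := by
              apply ENNReal.add_lt_top.mpr
              exact ⟨ENNReal.mul_lt_top ENNReal.ofReal_lt_top hFi, ENNReal.ofReal_lt_top⟩
      refine ⟨((continuous_norm.pow 2).measurable :
        Measurable fun y : Ed d => ‖y‖ ^ 2).aestronglyMeasurable, ?_⟩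
      rw [hasFiniteIntegral_iff_ofReal (Filter.Eventually.of_forall fun y => by positivity)]
      exact hbound
    -- conversion lintegral ↔ real integral
    have hrep : ∀ i ∈ S, ∀ a : Ed d,
        (∫⁻ y, ENNReal.ofReal (‖a - y‖ ^ 2 / 2) ∂((γ n i).condKernel x))
          = ENNReal.ofReal (∫ y, ‖a - y‖ ^ 2 / 2 ∂((γ n i).condKernel x)) := by
      intro i hiS a
      exact (ofReal_integral_eq_lintegral_ofReal
        ((integrable_normsq_sub _ (hK2 i hiS) a).div_const 2)
        (Filter.Eventually.of_forall fun y => by positivity)).symm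
    -- sums over S with real coefficients
    have hsumS : ∑ i ∈ S, α i = 1 := by
      rw [← hαsum]
      apply Finset.sum_subset (Finset.filter_subset _ _)
      intro i _ hiS
      by_contra h
      exact hiS (Finset.mem_filter.mpr ⟨Finset.mem_univ i, h⟩)
    have hTS : Tbar n x = ∑ i ∈ S, α i • ∫ y, y ∂((γ n i).condKernel x) := by
      rw [hTbar n x]
      symm
      apply Finset.sum_subset (Finset.filter_subset _ _)
      intro i _ hiS
      have hzi : α i = 0 := by
        by_contra h
        exact hiS (Finset.mem_filter.mpr ⟨Finset.mem_univ i, h⟩)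
      simp [hzi]
    have realineq : ∑ i ∈ S, α i * ∫ y, ‖Tbar n x - y‖ ^ 2 / 2 ∂((γ n i).condKernel x)
        ≤ ∑ i ∈ S, α i * ∫ y, ‖x - y‖ ^ 2 / 2 ∂((γ n i).condKernel x) := by
      have hexp : ∀ i ∈ S, ∀ a : Ed d,
          ∫ y, ‖a - y‖ ^ 2 / 2 ∂((γ n i).condKernel x)
            = (‖a‖ ^ 2 - 2 * ⟪a, ∫ y, y ∂((γ n i).condKernel x)⟫
                + ∫ y, ‖y‖ ^ 2 ∂((γ n i).condKernel x)) / 2 := by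
        intro i hiS a
        rw [integral_div, integral_normsq_sub _ (hK2 i hiS) a]
      have hL : ∑ i ∈ S, α i * ∫ y, ‖Tbar n x - y‖ ^ 2 / 2 ∂((γ n i).condKernel x)
          = ∑ i ∈ S, α i * ((‖Tbar n x‖ ^ 2
              - 2 * ⟪Tbar n x, ∫ y, y ∂((γ n i).condKernel x)⟫
              + ∫ y, ‖y‖ ^ 2 ∂((γ n i).condKernel x)) / 2) :=
        Finset.sum_congr rfl fun i h => by rw [hexp i h (Tbar n x)]
      have hR : ∑ i ∈ S, α i * ∫ y, ‖x - y‖ ^ 2 / 2 ∂((γ n i).condKernel x)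
          = ∑ i ∈ S, α i * ((‖x‖ ^ 2
              - 2 * ⟪x, ∫ y, y ∂((γ n i).condKernel x)⟫
              + ∫ y, ‖y‖ ^ 2 ∂((γ n i).condKernel x)) / 2) :=
        Finset.sum_congr rfl fun i h => by rw [hexp i h x]
      rw [hL, hR]
      exact jensen_step S α _ _ x (Tbar n x) hTS hsumS
    calc ∑ i ∈ S, ENNReal.ofReal (α i)
          * (∫⁻ y, ENNReal.ofReal (‖Tbar n x - y‖ ^ 2 / 2) ∂((γ n i).condKernel x))
        = ENNReal.ofReal (∑ i ∈ S,
            α i * ∫ y, ‖Tbar n x - y‖ ^ 2 / 2 ∂((γ n i).condKernel x)) := by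
          rw [ENNReal.ofReal_sum_of_nonneg
            (fun i _ => mul_nonneg (hα i) (integral_nonneg fun y => by positivity))]
          exact Finset.sum_congr rfl fun i hiS => by
            rw [hrep i hiS (Tbar n x), ← ENNReal.ofReal_mul (hα i)]
      _ ≤ ENNReal.ofReal (∑ i ∈ S,
            α i * ∫ y, ‖x - y‖ ^ 2 / 2 ∂((γ n i).condKernel x)) :=
          ENNReal.ofReal_le_ofReal realineq
      _ = ∑ i ∈ S, ENNReal.ofReal (α i)
          * (∫⁻ y, ENNReal.ofReal (‖x - y‖ ^ 2 / 2) ∂((γ n i).condKernel x)) := by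
          rw [ENNReal.ofReal_sum_of_nonneg
            (fun i _ => mul_nonneg (hα i) (integral_nonneg fun y => by positivity))]
          exact Finset.sum_congr rfl fun i hiS => by
            rw [hrep i hiS x, ← ENNReal.ofReal_mul (hα i)]
  -- combine
  calc ∑ i, ENNReal.ofReal (α i) * UOTcost τ (μ (n + 1)) (ν i)
      ≤ ∑ i, ENNReal.ofReal (α i)
        * ((∫⁻ p, ENNReal.ofReal (‖Tbar n p.1 - p.2‖ ^ 2 / 2) ∂(γ n i))
          + ENNReal.ofReal τ * Dpsi ((γ n i).map Prod.snd) (ν i)) :=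
        Finset.sum_le_sum fun i _ => mul_le_mul_right (key i) _
    _ = (∑ i, ENNReal.ofReal (α i)
          * (∫⁻ p, ENNReal.ofReal (‖Tbar n p.1 - p.2‖ ^ 2 / 2) ∂(γ n i)))
        + ∑ i, ENNReal.ofReal (α i)
          * (ENNReal.ofReal τ * Dpsi ((γ n i).map Prod.snd) (ν i)) := by
        simp only [mul_add, Finset.sum_add_distrib]
    _ ≤ (∑ i, ENNReal.ofReal (α i)
          * (∫⁻ p, ENNReal.ofReal (‖p.1 - p.2‖ ^ 2 / 2) ∂(γ n i)))
        + ∑ i, ENNReal.ofReal (α i)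
          * (ENNReal.ofReal τ * Dpsi ((γ n i).map Prod.snd) (ν i)) :=
        add_le_add_left core _
    _ = ∑ i, ENNReal.ofReal (α i)
        * ((∫⁻ p, ENNReal.ofReal (‖p.1 - p.2‖ ^ 2 / 2) ∂(γ n i))
          + ENNReal.ofReal τ * Dpsi ((γ n i).map Prod.snd) (ν i)) := by
        simp only [mul_add, Finset.sum_add_distrib]
    _ = ∑ i, ENNReal.ofReal (α i) * UOTcost τ (μ n) (ν i) :=
        Finset.sum_congr rfl fun i _ => by rw [hopt i]

end
end
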